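/- arXiv:1102.5008 — 4 statements merged into one kernel-verified Lean document; each statement's English description precedes it below -/
import Mathlib

section
/- Let Π be a Borel probability measure on 𝒫 and G₀ ∈ 𝒫. If G₀ lies in the weak support of Π (every open neighborhood of G₀ in the weak topology has positive Π-measure) and q_j(x; G₀) > 0 for every j ∈ {1, …, J} and every x ∈ 𝒳, then G₀ lies in the Kullback–Leibler support of Π: for every ε > 0, Π{G ∈ 𝒫 : ∫_𝒳 K(G₀, G | x) M(dx) < ε} > 0. -/
open MeasureTheory ProbabilityTheory Filter Real

noncomputable section

/-- The multinomial logit kernel `k_j(x, β)`. -/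
def mlogit {d J : ℕ} (j : Fin J) (x : Fin J → EuclideanSpace ℝ (Fin d))
    (β : EuclideanSpace ℝ (Fin d)) : ℝ :=
  Real.exp (inner ℝ (x j) β : ℝ) / ∑ l : Fin J, Real.exp (inner ℝ (x l) β : ℝ)

/-- Choice probability `q_j(x; G)`. -/
def choiceProb {d J : ℕ} (j : Fin J) (x : Fin J → EuclideanSpace ℝ (Fin d))
    (G : Measure (EuclideanSpace ℝ (Fin d))) : ℝ :=
  ∫ β, mlogit j x β ∂G

/-- The conditional Kullback–Leibler divergence
`K(G₀, G | x) = Σ_j q_j(x; G₀) log[q_j(x; G₀)/q_j(x; G)]`. -/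
def condKL {d J : ℕ} (G₀ G : Measure (EuclideanSpace ℝ (Fin d)))
    (x : Fin J → EuclideanSpace ℝ (Fin d)) : ℝ :=
  ∑ j : Fin J, choiceProb j x G₀ * Real.log (choiceProb j x G₀ / choiceProb j x G)

/-- `𝒫`, the space of Borel probability measures on `ℝ^d` with the topology of weak
convergence, equipped with its Borel σ-algebra. -/
instance {d : ℕ} : MeasurableSpace (ProbabilityMeasure (EuclideanSpace ℝ (Fin d))) :=
  borel _

namespace KLaux

open Topology

variable {d J : ℕ}

local notation "E" => EuclideanSpace ℝ (Fin d)

lemma denom_pos [NeZero J] (x : Fin J → E) (β : E) :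
    0 < ∑ l : Fin J, Real.exp (inner ℝ (x l) β : ℝ) :=
  Finset.sum_pos (fun _ _ => Real.exp_pos _) Finset.univ_nonempty

lemma mlogit_pos [NeZero J] (j : Fin J) (x : Fin J → E) (β : E) :
    0 < mlogit j x β := div_pos (Real.exp_pos _) (denom_pos x β)

lemma mlogit_le_one [NeZero J] (j : Fin J) (x : Fin J → E) (β : E) :
    mlogit j x β ≤ 1 := by
  rw [mlogit, div_le_one (denom_pos x β)]
  exact Finset.single_le_sum (f := fun l : Fin J => Real.exp (inner ℝ (x l) β : ℝ))
    (fun l _ => (Real.exp_pos _).le) (Finset.mem_univ j)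

lemma sum_mlogit [NeZero J] (x : Fin J → E) (β : E) :
    ∑ j : Fin J, mlogit j x β = 1 := by
  simp only [mlogit]
  rw [← Finset.sum_div, div_self (denom_pos x β).ne']

lemma continuous_mlogit_beta [NeZero J] (j : Fin J) (x : Fin J → E) :
    Continuous fun β : E => mlogit j x β := by
  apply Continuous.div
  · exact Real.continuous_exp.comp (continuous_const.inner continuous_id)
  · exact continuous_finset_sum _ fun l _ =>
      Real.continuous_exp.comp (continuous_const.inner continuous_id)
  · exact fun β => (denom_pos x β).ne'

lemma continuous_mlogit_x [NeZero J] (j : Fin J) (β : E) :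
    Continuous fun x : Fin J → E => mlogit j x β := by
  apply Continuous.div
  · exact Real.continuous_exp.comp ((continuous_apply j).inner continuous_const)
  · exact continuous_finset_sum _ fun l _ =>
      Real.continuous_exp.comp ((continuous_apply l).inner continuous_const)
  · exact fun x => (denom_pos x β).ne'

lemma mlogit_ge [NeZero J] {R : ℝ} (j : Fin J) {x : Fin J → E}
    (hx : ∀ l, ‖x l‖ ≤ R) (β : E) :
    Real.exp (-(2 * R * ‖β‖)) / (J : ℝ) ≤ mlogit j x β := by
  have hJpos : (0:ℝ) < J := Nat.cast_pos.2 (Nat.pos_of_ne_zero (NeZero.ne J))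
  have hinner : ∀ l : Fin J, |(inner ℝ (x l) β : ℝ)| ≤ R * ‖β‖ := fun l =>
    (abs_real_inner_le_norm _ _).trans
      (mul_le_mul_of_nonneg_right (hx l) (norm_nonneg β))
  have h2 : -(R * ‖β‖) ≤ (inner ℝ (x j) β : ℝ) := (abs_le.mp (hinner j)).1
  have hS : ∑ l : Fin J, Real.exp (inner ℝ (x l) β : ℝ) ≤ (J : ℝ) * Real.exp (R * ‖β‖) := by
    calc ∑ l : Fin J, Real.exp (inner ℝ (x l) β : ℝ)
        ≤ ∑ _l : Fin J, Real.exp (R * ‖β‖) :=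
          Finset.sum_le_sum fun l _ => Real.exp_le_exp.2 (abs_le.mp (hinner l)).2
      _ = (J : ℝ) * Real.exp (R * ‖β‖) := by
          simp [Finset.sum_const, Finset.card_univ, nsmul_eq_mul]
  have key : Real.exp (-(2 * R * ‖β‖)) / (J : ℝ) =
      Real.exp (-(R * ‖β‖)) / ((J : ℝ) * Real.exp (R * ‖β‖)) := by
    have hexp : Real.exp (-(2 * R * ‖β‖)) * Real.exp (R * ‖β‖) = Real.exp (-(R * ‖β‖)) := by
      rw [← Real.exp_add]; ring_nf
    field_simp
    nlinarith [hexp, hJpos]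
  rw [key, mlogit]
  exact div_le_div₀ (Real.exp_pos _).le (Real.exp_le_exp.2 h2) (denom_pos x β) hS

/-! ### Pointwise KL inequalities -/

lemma term_ge {p q : ℝ} (hp : 0 < p) (hq : 0 < q) : p - q ≤ p * Real.log (p / q) := by
  have h := Real.log_le_sub_one_of_pos (div_pos hq hp)
  have hd : q / p * p = q := div_mul_cancel₀ q hp.ne'
  rw [Real.log_div hq.ne' hp.ne'] at h
  rw [Real.log_div hp.ne' hq.ne']
  nlinarith [mul_le_mul_of_nonneg_left h hp.le]

lemma term_le {c p q : ℝ} (hc : 0 < c) (hp : 0 < p) (hp1 : p ≤ 1) (hcq : c ≤ q) :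
    p * Real.log (p / q) ≤ |p - q| / c := by
  have hq : 0 < q := hc.trans_le hcq
  rcases le_or_gt q p with h | h
  · have h1 := Real.log_le_sub_one_of_pos (div_pos hp hq)
    rw [abs_of_nonneg (by linarith)]
    have h2 : p * Real.log (p / q) ≤ p * (p / q - 1) :=
      mul_le_mul_of_nonneg_left h1 hp.le
    have h3 : p * (p / q - 1) = p * ((p - q) / q) := by field_simp
    have h4 : p * ((p - q) / q) ≤ 1 * ((p - q) / q) := by
      apply mul_le_mul_of_nonneg_right hp1
      apply div_nonneg (by linarith) hq.le
    have h5 : (p - q) / q ≤ (p - q) / c := by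
      apply div_le_div_of_nonneg_left (by linarith) hc hcq
    linarith
  · have h1 : Real.log (p / q) ≤ 0 :=
      Real.log_nonpos (by positivity) ((div_le_one hq).2 h.le)
    have h2 : p * Real.log (p / q) ≤ 0 := mul_nonpos_of_nonneg_of_nonpos hp.le h1
    have h3 : 0 ≤ |p - q| / c := by positivity
    linarith

lemma abs_term_le {c p q : ℝ} (hc : 0 < c) (hcp : c ≤ p) (hp1 : p ≤ 1) (hcq : c ≤ q)
    (hq1 : q ≤ 1) : |p * Real.log (p / q)| ≤ 2 * |Real.log c| := by
  have hp : 0 < p := hc.trans_le hcp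
  have hq : 0 < q := hc.trans_le hcq
  have hlogc : Real.log c ≤ 0 := Real.log_nonpos hc.le (hcp.trans hp1)
  have hlp : Real.log c ≤ Real.log p := Real.log_le_log hc hcp
  have hlq : Real.log c ≤ Real.log q := Real.log_le_log hc hcq
  have hlp0 : Real.log p ≤ 0 := Real.log_nonpos hp.le hp1
  have hlq0 : Real.log q ≤ 0 := Real.log_nonpos hq.le hq1
  have h1 : |p * Real.log (p / q)| = p * |Real.log p - Real.log q| := by
    rw [abs_mul, abs_of_pos hp, Real.log_div hp.ne' hq.ne']
  rw [h1, abs_of_nonpos hlogc]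
  have h2 : |Real.log p - Real.log q| ≤ -Real.log c + -Real.log c := by
    rw [abs_sub_le_iff]; constructor <;> linarith
  calc p * |Real.log p - Real.log q| ≤ 1 * (-Real.log c + -Real.log c) :=
        mul_le_mul hp1 h2 (abs_nonneg _) one_pos.le
    _ = 2 * -Real.log c := by ring

lemma klsum_nonneg {p q : Fin J → ℝ} (hp : ∀ j, 0 < p j) (hq : ∀ j, 0 < q j)
    (hsp : ∑ j, p j = 1) (hsq : ∑ j, q j = 1) :
    0 ≤ ∑ j, p j * Real.log (p j / q j) := by
  calc (0:ℝ) = ∑ j, (p j - q j) := by rw [Finset.sum_sub_distrib, hsp, hsq]; ring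
    _ ≤ _ := Finset.sum_le_sum fun j _ => term_ge (hp j) (hq j)

/-! ### Integral-level facts about `choiceProb` -/

lemma integrable_mlogit [NeZero J] (j : Fin J) (x : Fin J → E) (μ : Measure E)
    [IsProbabilityMeasure μ] : Integrable (mlogit j x) μ := by
  apply (integrable_const (1:ℝ)).mono' (continuous_mlogit_beta j x).aestronglyMeasurable
  refine ae_of_all _ fun β => ?_
  rw [Real.norm_eq_abs, abs_of_pos (mlogit_pos j x β)]
  exact mlogit_le_one j x β

lemma choiceProb_nonneg [NeZero J] (j : Fin J) (x : Fin J → E) (μ : Measure E) :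
    0 ≤ choiceProb j x μ :=
  integral_nonneg fun β => (mlogit_pos j x β).le

lemma choiceProb_le_one [NeZero J] (j : Fin J) (x : Fin J → E) (μ : Measure E)
    [IsProbabilityMeasure μ] : choiceProb j x μ ≤ 1 := by
  rw [choiceProb]
  calc ∫ β, mlogit j x β ∂μ ≤ ∫ _β, (1:ℝ) ∂μ :=
        integral_mono (integrable_mlogit j x μ) (integrable_const 1)
          fun β => mlogit_le_one j x β
    _ = 1 := by simp

lemma sum_choiceProb [NeZero J] (x : Fin J → E) (μ : Measure E)
    [IsProbabilityMeasure μ] : ∑ j : Fin J, choiceProb j x μ = 1 := by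
  simp only [choiceProb]
  rw [← integral_finset_sum _ fun j _ => integrable_mlogit j x μ]
  simp [sum_mlogit]

lemma continuous_choiceProb [NeZero J] (j : Fin J) (μ : Measure E)
    [IsProbabilityMeasure μ] :
    Continuous fun x : Fin J → E => choiceProb j x μ := by
  apply continuous_of_dominated
    (F := fun (x : Fin J → E) (β : E) => mlogit j x β) (bound := fun _ => (1:ℝ))
  · exact fun x => (continuous_mlogit_beta j x).aestronglyMeasurable
  · refine fun x => ae_of_all _ fun β => ?_
    rw [Real.norm_eq_abs, abs_of_pos (mlogit_pos j x β)]
    exact mlogit_le_one j x β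
  · exact integrable_const 1
  · exact ae_of_all _ fun β => continuous_mlogit_x j β

theorem key [NeZero J] (hJ : 2 ≤ J)
    (𝒳 : Set (Fin J → E)) (h𝒳 : IsCompact 𝒳)
    (M : Measure (Fin J → E)) [IsProbabilityMeasure M]
    (hM : M 𝒳ᶜ = 0)
    (prior : Measure (ProbabilityMeasure E))
    [IsProbabilityMeasure prior]
    (G₀ : ProbabilityMeasure E)
    (hsupp : ∀ U : Set (ProbabilityMeasure E),
      IsOpen U → G₀ ∈ U → 0 < prior U)
    (hpos : ∀ j : Fin J, ∀ x ∈ 𝒳, 0 < choiceProb j x G₀) :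
    ∀ ε > (0 : ℝ),
      0 < prior {G : ProbabilityMeasure E |
        ∫ x in 𝒳, condKL (G₀ : Measure E) (G : Measure E) x ∂M < ε} := by
  suffices hT : Tendsto (fun G : ProbabilityMeasure E =>
      ∫ x in 𝒳, condKL (G₀ : Measure E) (G : Measure E) x ∂M) (𝓝 G₀) (𝓝 0) by
    intro ε hε
    have hmem : (fun G : ProbabilityMeasure E =>
        ∫ x in 𝒳, condKL (G₀ : Measure E) (G : Measure E) x ∂M) ⁻¹' Set.Iio ε ∈ 𝓝 G₀ :=
      hT (Iio_mem_nhds hε)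
    obtain ⟨V, hVsub, hVopen, hV0⟩ := mem_nhds_iff.mp hmem
    exact (hsupp V hVopen hV0).trans_le (measure_mono hVsub)
  -- uniform bound `R` on `𝒳`
  obtain ⟨R₀, hR₀⟩ := h𝒳.isBounded.subset_closedBall 0
  set R : ℝ := max R₀ 0 with hRdef
  have hRx : ∀ x ∈ 𝒳, ∀ l, ‖x l‖ ≤ R := by
    intro x hx l
    have hx' := hR₀ hx
    rw [Metric.mem_closedBall, dist_zero_right] at hx'
    exact (norm_le_pi_norm x l).trans (hx'.trans (le_max_left _ _))
  have hR0 : 0 ≤ R := le_max_right _ _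
  -- the minorant `g`
  set gf : E → ℝ := fun β => Real.exp (-(2 * R * ‖β‖)) / (J : ℝ) with hgf
  have hJpos : (0:ℝ) < J := by positivity
  have hgpos : ∀ β, 0 < gf β := fun β => by positivity
  have hgle : ∀ β, gf β ≤ 1 := by
    intro β
    have h1 : Real.exp (-(2 * R * ‖β‖)) ≤ 1 :=
      Real.exp_le_one_iff.2 (neg_nonpos.mpr (by positivity))
    have h2 : (1:ℝ) ≤ J := by exact_mod_cast Nat.one_le_of_lt hJ
    calc gf β ≤ 1 / (J:ℝ) := by
          simp only [hgf]
          gcongr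
      _ ≤ 1 := by rw [div_le_one hJpos]; exact h2
  have hgcont : Continuous gf := by
    apply Continuous.div_const
    exact Real.continuous_exp.comp (continuous_const.mul continuous_norm).neg
  set gB : BoundedContinuousFunction E ℝ :=
    BoundedContinuousFunction.ofNormedAddCommGroup gf hgcont 1
      (fun β => by rw [Real.norm_eq_abs, abs_of_pos (hgpos β)]; exact hgle β) with hgB
  -- `g` minorizes all choice probabilities on `𝒳`
  have hglb : ∀ (ν : Measure E) [IsProbabilityMeasure ν], ∀ j : Fin J, ∀ x ∈ 𝒳,
      ∫ β, gf β ∂ν ≤ choiceProb j x ν := by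
    intro ν _ j x hx
    refine integral_mono ?_ (integrable_mlogit j x ν) fun β => mlogit_ge j (hRx x hx) β
    simpa [hgB] using gB.integrable ν
  set c₀ : ℝ := ∫ β, gf β ∂(G₀ : Measure E) with hc₀def
  have hc₀pos : 0 < c₀ := by
    rw [hc₀def]
    have hint : Integrable gf (G₀ : Measure E) := by simpa [hgB] using gB.integrable _
    rw [integral_pos_iff_support_of_nonneg (fun β => (hgpos β).le) hint]
    have hsup : Function.support gf = Set.univ :=
      Set.eq_univ_iff_forall.mpr fun β => (hgpos β).ne'
    simp [hsup]
  set c : ℝ := c₀ / 2 with hcdef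
  have hc : 0 < c := by positivity
  have hcc₀ : c < c₀ := by
    rw [hcdef]
    exact half_lt_self hc₀pos
  have hq₀lb : ∀ j : Fin J, ∀ x ∈ 𝒳, c ≤ choiceProb j x (G₀ : Measure E) :=
    fun j x hx => hcc₀.le.trans (hglb _ j x hx)
  have h𝒳m : MeasurableSet 𝒳 := h𝒳.isClosed.measurableSet
  -- reduce to sequences
  rw [tendsto_iff_seq_tendsto]
  intro u hu
  -- convergence of choice probabilities
  have h0 : ∀ (j : Fin J) (x : Fin J → E),
      Tendsto (fun n => choiceProb j x (u n : Measure E)) atTop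
        (𝓝 (choiceProb j x (G₀ : Measure E))) := by
    intro j x
    have hcont := continuous_mlogit_beta j x
    have := ProbabilityMeasure.tendsto_iff_forall_integral_tendsto.mp hu
      (BoundedContinuousFunction.ofNormedAddCommGroup (mlogit j x) hcont 1
        (fun β => by
          rw [Real.norm_eq_abs, abs_of_pos (mlogit_pos j x β)]; exact mlogit_le_one j x β))
    simpa [choiceProb] using this
  -- eventual lower bound on choice probabilities along the sequence
  have hgconv : Tendsto (fun n => ∫ β, gf β ∂(u n : Measure E)) atTop (𝓝 c₀) := by
    have := ProbabilityMeasure.tendsto_iff_forall_integral_tendsto.mp hu gB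
    simpa [hgB, hc₀def] using this
  have hev : ∀ᶠ n in atTop, ∀ j : Fin J, ∀ x ∈ 𝒳, c ≤ choiceProb j x (u n : Measure E) := by
    filter_upwards [hgconv.eventually (eventually_gt_nhds hcc₀)] with n hn j x hx
    exact (hn.le).trans (hglb _ j x hx)
  -- bounds on the absolute differences
  have habs_bd : ∀ (ν : Measure E) [IsProbabilityMeasure ν], ∀ (j : Fin J) (x : Fin J → E),
      |choiceProb j x (G₀ : Measure E) - choiceProb j x ν| ≤ 2 := by
    intro ν _ j x
    have h1 := choiceProb_nonneg j x (G₀ : Measure E)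
    have h2 := choiceProb_le_one j x (G₀ : Measure E)
    have h3 := choiceProb_nonneg j x ν
    have h4 := choiceProb_le_one j x ν
    rw [abs_sub_le_iff]
    constructor <;> linarith
  have hintabs : ∀ (n : ℕ) (j : Fin J), Integrable
      (fun x => |choiceProb j x (G₀ : Measure E) - choiceProb j x (u n : Measure E)|)
      (M.restrict 𝒳) := by
    intro n j
    have hcontj : Continuous (fun x : Fin J → E => |choiceProb j x (G₀ : Measure E) -
        choiceProb j x (u n : Measure E)|) :=
      ((continuous_choiceProb j _).sub (continuous_choiceProb j _)).abs
    refine (integrable_const (2:ℝ)).mono' hcontj.aestronglyMeasurable ?_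
    refine ae_of_all _ fun x => ?_
    rw [Real.norm_eq_abs, abs_abs]
    exact habs_bd _ j x
  -- convergence of the dominating sequence
  have hAtend : ∀ j : Fin J, Tendsto (fun n =>
      ∫ x in 𝒳, |choiceProb j x (G₀ : Measure E) - choiceProb j x (u n : Measure E)| ∂M)
      atTop (𝓝 0) := by
    intro j
    have hlim : Tendsto (fun n =>
        ∫ x in 𝒳, |choiceProb j x (G₀ : Measure E) - choiceProb j x (u n : Measure E)| ∂M)
        atTop (𝓝 (∫ x in 𝒳, (0:ℝ) ∂M)) := by
      apply tendsto_integral_of_dominated_convergence (fun _ => (2:ℝ))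
      · intro n
        exact (((continuous_choiceProb j (G₀ : Measure E)).sub
          (continuous_choiceProb j (u n : Measure E))).abs).aestronglyMeasurable
      · exact integrable_const 2
      · intro n
        refine ae_of_all _ fun x => ?_
        rw [Real.norm_eq_abs, abs_abs]
        exact habs_bd _ j x
      · refine ae_of_all _ fun x => ?_
        have := (tendsto_const_nhds (x := choiceProb j x (G₀ : Measure E))
          (f := atTop)).sub (h0 j x)
        simpa using this.abs
    simpa using hlim
  -- measurability of `condKL` in `x`
  have hmeasKL : ∀ G : ProbabilityMeasure E,
      AEStronglyMeasurable (fun x => condKL (G₀ : Measure E) (G : Measure E) x)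
        (M.restrict 𝒳) := by
    intro G
    apply Measurable.aestronglyMeasurable
    simp only [condKL]
    apply Finset.measurable_sum
    intro j _
    exact ((continuous_choiceProb j (G₀ : Measure E)).measurable).mul
      (((continuous_choiceProb j (G₀ : Measure E)).measurable.div
        (continuous_choiceProb j (G : Measure E)).measurable).log)
  -- eventual upper bound
  have hub : ∀ᶠ n in atTop,
      (∫ x in 𝒳, condKL (G₀ : Measure E) (u n : Measure E) x ∂M) ≤
        (∑ j : Fin J, ∫ x in 𝒳, |choiceProb j x (G₀ : Measure E) -
          choiceProb j x (u n : Measure E)| ∂M) / c := by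
    filter_upwards [hev] with n hn
    have hptwise : ∀ x ∈ 𝒳,
        condKL (G₀ : Measure E) (u n : Measure E) x ≤
          (∑ j : Fin J, |choiceProb j x (G₀ : Measure E) -
            choiceProb j x (u n : Measure E)|) / c := by
      intro x hx
      simp only [condKL]
      rw [Finset.sum_div]
      refine Finset.sum_le_sum fun j _ => ?_
      exact term_le hc (hpos j x hx) (choiceProb_le_one j x _) (hn j x hx)
    have hintKL : Integrable
        (fun x => condKL (G₀ : Measure E) (u n : Measure E) x) (M.restrict 𝒳) := by
      refine (integrable_const ((J : ℝ) * (2 * |Real.log c|))).mono' (hmeasKL (u n)) ?_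
      rw [ae_restrict_iff' h𝒳m]
      refine ae_of_all _ fun x hx => ?_
      rw [Real.norm_eq_abs]
      simp only [condKL]
      calc |∑ j : Fin J, choiceProb j x (G₀ : Measure E) *
            Real.log (choiceProb j x (G₀ : Measure E) / choiceProb j x (u n : Measure E))|
          ≤ ∑ j : Fin J, |choiceProb j x (G₀ : Measure E) *
            Real.log (choiceProb j x (G₀ : Measure E) / choiceProb j x (u n : Measure E))| :=
            Finset.abs_sum_le_sum_abs _ _
        _ ≤ ∑ _j : Fin J, 2 * |Real.log c| := Finset.sum_le_sum fun j _ =>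
            abs_term_le hc (hq₀lb j x hx) (choiceProb_le_one j x _) (hn j x hx)
              (choiceProb_le_one j x _)
        _ = (J : ℝ) * (2 * |Real.log c|) := by
            simp [Finset.sum_const, Finset.card_univ, nsmul_eq_mul]
    have hintRHS : Integrable
        (fun x => (∑ j : Fin J, |choiceProb j x (G₀ : Measure E) -
          choiceProb j x (u n : Measure E)|) / c) (M.restrict 𝒳) :=
      (integrable_finset_sum _ fun j _ => hintabs n j).div_const c
    calc (∫ x in 𝒳, condKL (G₀ : Measure E) (u n : Measure E) x ∂M)
        ≤ ∫ x in 𝒳, (∑ j : Fin J, |choiceProb j x (G₀ : Measure E) -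
            choiceProb j x (u n : Measure E)|) / c ∂M :=
          setIntegral_mono_on hintKL hintRHS h𝒳m hptwise
      _ = (∑ j : Fin J, ∫ x in 𝒳, |choiceProb j x (G₀ : Measure E) -
            choiceProb j x (u n : Measure E)| ∂M) / c := by
          rw [integral_div, integral_finset_sum _ fun j _ => hintabs n j]
  -- eventual lower bound
  have hlb : ∀ᶠ n in atTop,
      0 ≤ ∫ x in 𝒳, condKL (G₀ : Measure E) (u n : Measure E) x ∂M := by
    filter_upwards [hev] with n hn
    refine setIntegral_nonneg h𝒳m fun x hx => ?_
    simp only [condKL]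
    exact klsum_nonneg (fun j => hpos j x hx) (fun j => hc.trans_le (hn j x hx))
      (sum_choiceProb x _) (sum_choiceProb x _)
  -- squeeze
  have hrhs : Tendsto (fun n => (∑ j : Fin J, ∫ x in 𝒳, |choiceProb j x (G₀ : Measure E) -
      choiceProb j x (u n : Measure E)| ∂M) / c) atTop (𝓝 0) := by
    have hsum := tendsto_finset_sum (Finset.univ : Finset (Fin J)) fun j _ => hAtend j
    have := hsum.div_const c
    simpa using this
  exact squeeze_zero' hlb hub hrhs

end KLaux

/-- if `G₀` is in the weak support of the prior and the choice probabilities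
under `G₀` are positive on `𝒳`, then `G₀` is in the Kullback–Leibler support of the prior. -/
theorem weak_support_implies_KL_support {d J : ℕ} (hJ : 2 ≤ J)
    (𝒳 : Set (Fin J → EuclideanSpace ℝ (Fin d))) (h𝒳 : IsCompact 𝒳)
    (M : Measure (Fin J → EuclideanSpace ℝ (Fin d))) [IsProbabilityMeasure M]
    (hM : M 𝒳ᶜ = 0)
    (prior : Measure (ProbabilityMeasure (EuclideanSpace ℝ (Fin d))))
    [IsProbabilityMeasure prior]
    (G₀ : ProbabilityMeasure (EuclideanSpace ℝ (Fin d)))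
    (hsupp : ∀ U : Set (ProbabilityMeasure (EuclideanSpace ℝ (Fin d))),
      IsOpen U → G₀ ∈ U → 0 < prior U)
    (hpos : ∀ j : Fin J, ∀ x ∈ 𝒳, 0 < choiceProb j x G₀) :
    ∀ ε > (0 : ℝ),
      0 < prior {G : ProbabilityMeasure (EuclideanSpace ℝ (Fin d)) |
        ∫ x in 𝒳, condKL (G₀ : Measure (EuclideanSpace ℝ (Fin d))) (G : Measure (EuclideanSpace ℝ (Fin d))) x ∂M < ε} := by
  haveI : NeZero J := ⟨by omega⟩
  exact KLaux.key hJ 𝒳 h𝒳 M hM prior G₀ hsupp hpos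

end
end

section
/- Assume q_j(x; G₀) > 0 for every j ∈ {1, …, J} and every x ∈ 𝒳, where G₀ ∈ 𝒫. Then for every j ∈ {1, …, J} and every η ∈ (0, 1), there exists an open neighborhood W of G₀ in the weak topology on 𝒫 such that for every G ∈ W and every x ∈ 𝒳, |q_j(x; G)/q_j(x; G₀) − 1| ≤ η. -/
open MeasureTheory ProbabilityTheory Filter Real BoundedContinuousFunction

set_option maxHeartbeats 1000000

noncomputable section

namespace MlogitAux

variable {d J : ℕ}

lemma denom_pos (hJ : 0 < J) (x : Fin J → EuclideanSpace ℝ (Fin d))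
    (β : EuclideanSpace ℝ (Fin d)) :
    0 < ∑ l : Fin J, Real.exp (inner ℝ (x l) β : ℝ) :=
  Finset.sum_pos (fun l _ => Real.exp_pos _) ⟨⟨0, hJ⟩, Finset.mem_univ _⟩

lemma mlogit_mem (hJ : 0 < J) (j : Fin J) (x : Fin J → EuclideanSpace ℝ (Fin d))
    (β : EuclideanSpace ℝ (Fin d)) : mlogit j x β ∈ Set.Icc (0 : ℝ) 1 := by
  have hd := denom_pos hJ x β
  refine ⟨div_nonneg (Real.exp_pos _).le hd.le, ?_⟩
  rw [mlogit, div_le_one hd]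
  exact Finset.single_le_sum (fun l _ => (Real.exp_pos ((inner ℝ (x l) β : ℝ))).le)
    (Finset.mem_univ j)

lemma abs_mlogit_sub_le_one (hJ : 0 < J) (j : Fin J) (x y : Fin J → EuclideanSpace ℝ (Fin d))
    (β : EuclideanSpace ℝ (Fin d)) : |mlogit j x β - mlogit j y β| ≤ 1 := by
  have h1 := mlogit_mem hJ j x β
  have h2 := mlogit_mem hJ j y β
  rw [abs_le]
  constructor <;> [linarith [h1.1, h2.2]; linarith [h1.2, h2.1]]

lemma mlogit_continuous (hJ : 0 < J) (j : Fin J) :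
    Continuous fun p : (Fin J → EuclideanSpace ℝ (Fin d)) × EuclideanSpace ℝ (Fin d) =>
      mlogit j p.1 p.2 := by
  unfold mlogit
  have hc : ∀ l : Fin J, Continuous fun p :
      (Fin J → EuclideanSpace ℝ (Fin d)) × EuclideanSpace ℝ (Fin d) =>
      Real.exp (inner ℝ (p.1 l) p.2 : ℝ) := fun l =>
    Real.continuous_exp.comp (Continuous.inner
      ((continuous_apply l).comp continuous_fst) continuous_snd)
  exact (hc j).div (continuous_finset_sum _ fun l _ => hc l)
    (fun p => (denom_pos hJ p.1 p.2).ne')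

lemma mlogit_continuous_x (hJ : 0 < J) (j : Fin J) (β : EuclideanSpace ℝ (Fin d)) :
    Continuous fun x : Fin J → EuclideanSpace ℝ (Fin d) => mlogit j x β := by
  unfold mlogit
  have hc : ∀ l : Fin J, Continuous fun x : Fin J → EuclideanSpace ℝ (Fin d) =>
      Real.exp (inner ℝ (x l) β : ℝ) := fun l =>
    Real.continuous_exp.comp (Continuous.inner (continuous_apply l) continuous_const)
  exact (hc j).div (continuous_finset_sum _ fun l _ => hc l)
    (fun x => (denom_pos hJ x β).ne')

lemma mlogit_continuous_beta (hJ : 0 < J) (j : Fin J)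
    (x : Fin J → EuclideanSpace ℝ (Fin d)) : Continuous (mlogit j x) := by
  unfold mlogit
  have hc : ∀ l : Fin J, Continuous fun β : EuclideanSpace ℝ (Fin d) =>
      Real.exp (inner ℝ (x l) β : ℝ) := fun l =>
    Real.continuous_exp.comp (Continuous.inner continuous_const continuous_id)
  exact (hc j).div (continuous_finset_sum _ fun l _ => hc l)
    (fun β => (denom_pos hJ x β).ne')

/-- The mlogit kernel as a bounded continuous function of `β`. -/
def mlogitBCF (hJ : 0 < J) (j : Fin J) (x : Fin J → EuclideanSpace ℝ (Fin d)) :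
    EuclideanSpace ℝ (Fin d) →ᵇ ℝ :=
  BoundedContinuousFunction.ofNormedAddCommGroup (mlogit j x)
    (mlogit_continuous_beta hJ j x) 1
    (fun β => by
      have h := mlogit_mem hJ j x β
      rw [Real.norm_eq_abs, abs_le]
      exact ⟨by linarith [h.1], h.2⟩)

@[simp] lemma mlogitBCF_apply (hJ : 0 < J) (j : Fin J)
    (x : Fin J → EuclideanSpace ℝ (Fin d)) (β : EuclideanSpace ℝ (Fin d)) :
    mlogitBCF hJ j x β = mlogit j x β := rfl

lemma choiceProb_eq (hJ : 0 < J) (j : Fin J) (x : Fin J → EuclideanSpace ℝ (Fin d))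
    (ν : Measure (EuclideanSpace ℝ (Fin d))) :
    choiceProb j x ν = ∫ β, mlogitBCF hJ j x β ∂ν := rfl

/-- A continuous cutoff: `0` on `closedBall 0 R`, `1` outside `closedBall 0 (R+1)`. -/
def cutoff (d : ℕ) (R : ℝ) : EuclideanSpace ℝ (Fin d) →ᵇ ℝ :=
  BoundedContinuousFunction.ofNormedAddCommGroup
    (fun β => min 1 (Metric.infDist β (Metric.closedBall 0 R)))
    (continuous_const.min (Metric.continuous_infDist_pt _)) 1
    (fun β => by
      rw [Real.norm_eq_abs, abs_le]
      exact ⟨by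
        have := Metric.infDist_nonneg (x := β) (s := Metric.closedBall (0 : EuclideanSpace ℝ (Fin d)) R)
        have h0 : (0:ℝ) ≤ min 1 (Metric.infDist β (Metric.closedBall 0 R)) :=
          le_min zero_le_one this
        linarith, min_le_left _ _⟩)

@[simp] lemma cutoff_apply (R : ℝ) (β : EuclideanSpace ℝ (Fin d)) :
    cutoff d R β = min 1 (Metric.infDist β (Metric.closedBall 0 R)) := rfl

lemma cutoff_nonneg (R : ℝ) (β : EuclideanSpace ℝ (Fin d)) : 0 ≤ cutoff d R β :=
  le_min zero_le_one Metric.infDist_nonneg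

lemma cutoff_eq_zero {R : ℝ} {β : EuclideanSpace ℝ (Fin d)}
    (h : β ∈ Metric.closedBall (0 : EuclideanSpace ℝ (Fin d)) R) : cutoff d R β = 0 := by
  simp [cutoff_apply, Metric.infDist_zero_of_mem h]

lemma cutoff_eq_one {R : ℝ} (hR : 0 < R) {β : EuclideanSpace ℝ (Fin d)}
    (h : β ∉ Metric.closedBall (0 : EuclideanSpace ℝ (Fin d)) (R + 1)) : cutoff d R β = 1 := by
  have hne : (Metric.closedBall (0 : EuclideanSpace ℝ (Fin d)) R).Nonempty :=
    Metric.nonempty_closedBall.mpr hR.le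
  have hβ : R + 1 < dist β 0 := by
    simpa [Metric.mem_closedBall, not_le] using h
  have h1 : (1:ℝ) ≤ Metric.infDist β (Metric.closedBall (0 : EuclideanSpace ℝ (Fin d)) R) := by
    by_contra hlt
    push_neg at hlt
    obtain ⟨y, hy, hdy⟩ := (Metric.infDist_lt_iff hne).mp hlt
    have : dist β 0 ≤ dist β y + dist y 0 := dist_triangle _ _ _
    have hy0 : dist y 0 ≤ R := Metric.mem_closedBall.mp hy
    linarith
  simp [cutoff_apply, min_eq_left h1]

/-- Tightness for a probability measure on Euclidean space. -/
lemma exists_ball_compl_lt (μ : Measure (EuclideanSpace ℝ (Fin d))) [IsProbabilityMeasure μ]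
    {ε : ℝ} (hε : 0 < ε) :
    ∃ R : ℝ, 0 < R ∧ (μ (Metric.closedBall (0 : EuclideanSpace ℝ (Fin d)) R)ᶜ).toReal < ε := by
  have h := tendsto_measure_iInter_atTop (μ := μ)
    (s := fun n : ℕ => (Metric.closedBall (0 : EuclideanSpace ℝ (Fin d)) n)ᶜ)
    (fun n => measurableSet_closedBall.compl.nullMeasurableSet)
    (fun n m hnm => Set.compl_subset_compl.mpr
      (Metric.closedBall_subset_closedBall (by exact_mod_cast hnm)))
    ⟨0, measure_ne_top μ _⟩
  have hempty : (⋂ n : ℕ, (Metric.closedBall (0 : EuclideanSpace ℝ (Fin d)) n)ᶜ) = ∅ := by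
    ext β
    simp only [Set.mem_iInter, Set.mem_compl_iff, Metric.mem_closedBall,
      Set.mem_empty_iff_false, iff_false, not_forall, not_not]
    obtain ⟨n, hn⟩ := exists_nat_ge (dist β 0)
    exact ⟨n, hn⟩
  rw [hempty, measure_empty] at h
  have hlt : ∀ᶠ n : ℕ in atTop,
      μ (Metric.closedBall (0 : EuclideanSpace ℝ (Fin d)) n)ᶜ < ENNReal.ofReal ε :=
    h.eventually_lt_const (ENNReal.ofReal_pos.mpr hε)
  obtain ⟨n, hn1, hn2⟩ := ((eventually_ge_atTop 1).and hlt).exists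
  refine ⟨(n : ℝ), by exact_mod_cast hn1, ?_⟩
  have := ENNReal.toReal_lt_of_lt_ofReal hn2
  exact this

end MlogitAux

open MlogitAux

/-- if the choice probabilities under `G₀` are positive on the compact set `𝒳`,
then for any `j` and `η ∈ (0,1)` there is a weak neighborhood `W` of `G₀` on which the ratio
`q_j(x;G)/q_j(x;G₀)` is uniformly within `η` of `1` over `x ∈ 𝒳`. -/
theorem ratio_uniformly_close_on_weak_neighborhood {d J : ℕ} (hJ : 2 ≤ J)
    (𝒳 : Set (Fin J → EuclideanSpace ℝ (Fin d))) (h𝒳 : IsCompact 𝒳)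
    (G₀ : ProbabilityMeasure (EuclideanSpace ℝ (Fin d)))
    (hpos : ∀ j : Fin J, ∀ x ∈ 𝒳, 0 < choiceProb j x G₀)
    (j : Fin J) (η : ℝ) (hη : η ∈ Set.Ioo (0 : ℝ) 1) :
    ∃ W : Set (ProbabilityMeasure (EuclideanSpace ℝ (Fin d))),
      IsOpen W ∧ G₀ ∈ W ∧
        ∀ G ∈ W, ∀ x ∈ 𝒳,
          |choiceProb j x G / choiceProb j x G₀ - 1| ≤ η := by
  classical
  obtain ⟨hη0, hη1⟩ := hη
  have hJ0 : 0 < J := lt_of_lt_of_le two_pos hJ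
  rcases 𝒳.eq_empty_or_nonempty with rfl | hne
  · exact ⟨Set.univ, isOpen_univ, trivial, fun G _ x hx => absurd hx (Set.notMem_empty x)⟩
  -- continuity of `x ↦ choiceProb j x G₀` on the compact set `𝒳` gives a positive minimum `m`
  have hcont : Continuous fun x => choiceProb j x (G₀ : Measure (EuclideanSpace ℝ (Fin d))) := by
    apply continuous_of_dominated (bound := fun _ => (1 : ℝ))
    · exact fun x => (mlogit_continuous_beta hJ0 j x).aestronglyMeasurable
    · intro x
      filter_upwards with β
      have h := mlogit_mem hJ0 j x β
      rw [Real.norm_eq_abs, abs_le]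
      exact ⟨by linarith [h.1], h.2⟩
    · exact integrable_const 1
    · filter_upwards with β
      exact mlogit_continuous_x hJ0 j β
  obtain ⟨x₀, hx₀X, hx₀min⟩ := h𝒳.exists_isMinOn hne hcont.continuousOn
  set m := choiceProb j x₀ (G₀ : Measure (EuclideanSpace ℝ (Fin d))) with hm
  have hm0 : 0 < m := hpos j x₀ hx₀X
  set ε := η * m / 7 with hεdef
  have hε0 : 0 < ε := by positivity
  obtain ⟨R, hR0, hRmeas⟩ :=
    exists_ball_compl_lt (G₀ : Measure (EuclideanSpace ℝ (Fin d))) hε0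
  set K' := Metric.closedBall (0 : EuclideanSpace ℝ (Fin d)) (R + 1) with hK'
  -- uniform continuity on the compact set 𝒳 ×ˢ K'
  have hKc : IsCompact (𝒳 ×ˢ K') := h𝒳.prod (isCompact_closedBall _ _)
  have huc := hKc.uniformContinuousOn_of_continuous
    ((mlogit_continuous hJ0 j).continuousOn)
  rw [Metric.uniformContinuousOn_iff] at huc
  obtain ⟨δ, hδ0, hδ⟩ := huc ε hε0
  -- finite δ-net of 𝒳 with centers in 𝒳
  obtain ⟨T, hTX, hTfin, hTcover⟩ := h𝒳.elim_finite_subcover_image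
    (b := 𝒳) (c := fun x => Metric.ball x δ)
    (fun x _ => Metric.isOpen_ball)
    (fun x hx => Set.mem_biUnion hx (Metric.mem_ball_self hδ0))
  set φ := cutoff d R with hφ
  set W : Set (ProbabilityMeasure (EuclideanSpace ℝ (Fin d))) :=
    {G | ∫ β, φ β ∂(G : Measure _) < ∫ β, φ β ∂(G₀ : Measure _) + ε} ∩
      ⋂ t ∈ T, {G | |∫ β, mlogitBCF hJ0 j t β ∂(G : Measure _)
        - ∫ β, mlogitBCF hJ0 j t β ∂(G₀ : Measure _)| < ε} with hW
  have hWopen : IsOpen W := by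
    apply IsOpen.inter
    · exact isOpen_Iio.preimage (ProbabilityMeasure.continuous_integral_boundedContinuousFunction φ)
    · refine hTfin.isOpen_biInter fun t ht => ?_
      exact isOpen_lt
        (((ProbabilityMeasure.continuous_integral_boundedContinuousFunction
          (mlogitBCF hJ0 j t)).sub continuous_const).abs) continuous_const
  have hWmem : G₀ ∈ W := by
    constructor
    · exact lt_add_of_pos_right _ hε0
    · simp only [Set.mem_iInter, Set.mem_setOf_eq]
      intro t _
      simpa using hε0
  refine ⟨W, hWopen, hWmem, ?_⟩
  intro G hG x hx
  obtain ⟨hGφ, hGT⟩ := hG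
  simp only [Set.mem_iInter, Set.mem_setOf_eq] at hGT
  -- pick a net point
  obtain ⟨t, htT, hxt⟩ := Set.mem_iUnion₂.mp (hTcover hx)
  have htX : t ∈ 𝒳 := hTX htT
  have hxtδ : dist x t < δ := Metric.mem_ball.mp hxt
  -- pointwise bound |mlogit j x β - mlogit j t β| ≤ ε + indicator of K'ᶜ
  have hpt : ∀ β, |mlogit j x β - mlogit j t β|
      ≤ ε + Set.indicator K'ᶜ (fun _ => (1:ℝ)) β := by
    intro β
    by_cases hβ : β ∈ K'
    · have hmem1 : (x, β) ∈ 𝒳 ×ˢ K' := ⟨hx, hβ⟩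
      have hmem2 : (t, β) ∈ 𝒳 ×ˢ K' := ⟨htX, hβ⟩
      have hd : dist ((x, β) : (Fin J → EuclideanSpace ℝ (Fin d)) × _) (t, β) < δ := by
        rw [Prod.dist_eq, dist_self]
        simpa [max_eq_left dist_nonneg] using hxtδ
      have := hδ _ hmem1 _ hmem2 hd
      rw [Real.dist_eq] at this
      rw [Set.indicator_of_notMem (by simpa using hβ)]
      simpa using this.le
    · rw [Set.indicator_of_mem (by simpa using hβ)]
      have := abs_mlogit_sub_le_one hJ0 j x t β
      linarith
  -- integrability facts for an arbitrary probability measure ν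
  have hindInt : ∀ (ν : Measure (EuclideanSpace ℝ (Fin d))) [IsProbabilityMeasure ν],
      Integrable (Set.indicator K'ᶜ (fun _ => (1:ℝ))) ν := by
    intro ν _
    exact (integrable_const (1:ℝ)).indicator measurableSet_closedBall.compl
  have hindInteg : ∀ (ν : Measure (EuclideanSpace ℝ (Fin d))) [IsProbabilityMeasure ν],
      ∫ β, Set.indicator K'ᶜ (fun _ => (1:ℝ)) β ∂ν = (ν K'ᶜ).toReal := by
    intro ν _
    rw [integral_indicator_const (1:ℝ) measurableSet_closedBall.compl]
    simp
    rfl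
  -- main increment bound
  have hdiff : ∀ (ν : Measure (EuclideanSpace ℝ (Fin d))) [IsProbabilityMeasure ν],
      |choiceProb j x ν - choiceProb j t ν| ≤ ε + (ν K'ᶜ).toReal := by
    intro ν _
    have hInt1 : Integrable (mlogit j x) ν := by
      rw [show mlogit j x = ⇑(mlogitBCF hJ0 j x) from rfl]
      exact (mlogitBCF hJ0 j x).integrable ν
    have hInt2 : Integrable (mlogit j t) ν := by
      rw [show mlogit j t = ⇑(mlogitBCF hJ0 j t) from rfl]
      exact (mlogitBCF hJ0 j t).integrable ν
    have h1 : choiceProb j x ν - choiceProb j t ν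
        = ∫ β, (mlogit j x β - mlogit j t β) ∂ν := (integral_sub hInt1 hInt2).symm
    rw [h1]
    calc |∫ β, (mlogit j x β - mlogit j t β) ∂ν|
        ≤ ∫ β, |mlogit j x β - mlogit j t β| ∂ν := by
          simpa [Real.norm_eq_abs] using
            (MeasureTheory.norm_integral_le_integral_norm (μ := ν)
              (fun β => mlogit j x β - mlogit j t β))
      _ ≤ ∫ β, (ε + Set.indicator K'ᶜ (fun _ => (1:ℝ)) β) ∂ν := by
          exact integral_mono ((hInt1.sub hInt2).abs)
            ((integrable_const ε).add (hindInt ν)) (fun β => hpt β)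
      _ = ε + (ν K'ᶜ).toReal := by
          rw [integral_add (integrable_const ε) (hindInt ν), integral_const,
            hindInteg ν]
          simp
  -- tail bounds
  have hG₀tailR : ((G₀ : Measure (EuclideanSpace ℝ (Fin d)))
      (Metric.closedBall 0 R)ᶜ).toReal < ε := hRmeas
  have hK'sub : K'ᶜ ⊆ (Metric.closedBall (0 : EuclideanSpace ℝ (Fin d)) R)ᶜ :=
    Set.compl_subset_compl.mpr (Metric.closedBall_subset_closedBall (by linarith))
  have hG₀tail : ((G₀ : Measure (EuclideanSpace ℝ (Fin d))) K'ᶜ).toReal < ε :=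
    lt_of_le_of_lt (ENNReal.toReal_mono (measure_ne_top _ _) (measure_mono hK'sub)) hRmeas
  -- tail bound for G via the cutoff function
  have hφle : ∀ β, Set.indicator K'ᶜ (fun _ => (1:ℝ)) β ≤ φ β := by
    intro β
    by_cases hβ : β ∈ K'
    · rw [Set.indicator_of_notMem (by simpa using hβ)]
      exact cutoff_nonneg R β
    · rw [Set.indicator_of_mem (by simpa using hβ),
        cutoff_eq_one hR0 (by simpa [hK'] using hβ)]
  have hφle' : ∀ β, φ β ≤ Set.indicator
      (Metric.closedBall (0 : EuclideanSpace ℝ (Fin d)) R)ᶜ (fun _ => (1:ℝ)) β := by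
    intro β
    by_cases hβ : β ∈ Metric.closedBall (0 : EuclideanSpace ℝ (Fin d)) R
    · rw [Set.indicator_of_notMem (by simpa using hβ), cutoff_eq_zero hβ]
    · rw [Set.indicator_of_mem (by simpa using hβ)]
      exact min_le_left _ _
  have hGtail : (((G : ProbabilityMeasure _) : Measure (EuclideanSpace ℝ (Fin d)))
      K'ᶜ).toReal < 2 * ε := by
    have h1 : (((G : ProbabilityMeasure _) : Measure (EuclideanSpace ℝ (Fin d))) K'ᶜ).toReal
        ≤ ∫ β, φ β ∂(G : Measure _) := by
      rw [← hindInteg (G : Measure _)]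
      exact integral_mono (hindInt _) (φ.integrable _) hφle
    have h2 : ∫ β, φ β ∂(G₀ : Measure (EuclideanSpace ℝ (Fin d)))
        ≤ ((G₀ : Measure (EuclideanSpace ℝ (Fin d)))
          (Metric.closedBall 0 R)ᶜ).toReal := by
      have hindInteg' : ∫ β, Set.indicator
          (Metric.closedBall (0 : EuclideanSpace ℝ (Fin d)) R)ᶜ (fun _ => (1:ℝ)) β
          ∂(G₀ : Measure _) = ((G₀ : Measure (EuclideanSpace ℝ (Fin d)))
          (Metric.closedBall 0 R)ᶜ).toReal := by
        rw [integral_indicator_const (1:ℝ) measurableSet_closedBall.compl]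
        simp
        rfl
      rw [← hindInteg']
      exact integral_mono (φ.integrable _)
        ((integrable_const (1:ℝ)).indicator measurableSet_closedBall.compl) hφle'
    have := hGφ
    simp only [Set.mem_setOf_eq] at this
    linarith
  -- middle term
  have hmid : |choiceProb j t (G : Measure (EuclideanSpace ℝ (Fin d)))
      - choiceProb j t (G₀ : Measure (EuclideanSpace ℝ (Fin d)))| < ε := by
    rw [choiceProb_eq hJ0, choiceProb_eq hJ0]
    exact hGT t htT
  -- combining
  have hd1 := hdiff ((G : ProbabilityMeasure _) : Measure (EuclideanSpace ℝ (Fin d)))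
  have hd2 := hdiff (G₀ : Measure (EuclideanSpace ℝ (Fin d)))
  set a := choiceProb j x (G : Measure (EuclideanSpace ℝ (Fin d))) with ha
  set b := choiceProb j t (G : Measure (EuclideanSpace ℝ (Fin d))) with hb
  set b' := choiceProb j t (G₀ : Measure (EuclideanSpace ℝ (Fin d))) with hb'
  set a' := choiceProb j x (G₀ : Measure (EuclideanSpace ℝ (Fin d))) with ha'
  have htotal : |a - a'| ≤ 6 * ε := by
    have h3 : |a - a'| ≤ |a - b| + |b - b'| + |b' - a'| := by
      calc |a - a'| = |(a - b) + (b - b') + (b' - a')| := by ring_nf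
        _ ≤ |a - b| + |b - b'| + |b' - a'| := abs_add_three _ _ _
    have h4 : |a - b| ≤ 3 * ε := by
      have := hd1
      linarith [hGtail]
    have h5 : |b' - a'| ≤ 2 * ε := by
      rw [abs_sub_comm]
      have := hd2
      linarith [hG₀tail]
    linarith [hmid]
  have ha'pos : 0 < a' := hpos j x hx
  have hma' : m ≤ a' := hx₀min hx
  have hfin : |a - a'| ≤ η * a' := by
    have h6 : 6 * ε ≤ η * m := by
      rw [hεdef]; nlinarith
    have h7 : η * m ≤ η * a' := by nlinarith
    linarith
  rw [div_sub_one ha'pos.ne', abs_div, abs_of_pos ha'pos, div_le_iff₀ ha'pos]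
  linarith [hfin, abs_nonneg (a - a')]

end
end

section
/- For every x = (x_1, …, x_J) ∈ (ℝ^d)^J, every j ∈ {1, …, J}, and all β₁, β₂ ∈ ℝ^d, the multinomial logit kernel satisfies the Lipschitz bound |k_j(x, β₁) − k_j(x, β₂)| ≤ K_x |β₁ − β₂|, where K_x = max_{1 ≤ i ≤ J} |x_j − x_i| and |·| denotes the Euclidean norm on ℝ^d. -/
open MeasureTheory Real

noncomputable section

lemma mlogit_aux {J : ℕ} (a c : Fin J → ℝ) (j : Fin J) {K : ℝ}
    (hK : ∀ l, |c j - c l| ≤ K) :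
    |Real.exp (a j + c j) / (∑ l : Fin J, Real.exp (a l + c l))
      - Real.exp (a j) / (∑ l : Fin J, Real.exp (a l))| ≤ K := by
  have hK0 : 0 ≤ K := le_trans (abs_nonneg _) (hK j)
  set S : ℝ → ℝ := fun t => ∑ l : Fin J, Real.exp (a l + t * c l) with hSdef
  have hS : ∀ t, 0 < S t := fun t =>
    Finset.sum_pos (fun l _ => Real.exp_pos _) ⟨j, Finset.mem_univ j⟩
  set f : ℝ → ℝ := fun t => Real.exp (a j + t * c j) / S t with hfdef
  have hN : ∀ (l : Fin J) (t : ℝ),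
      HasDerivAt (fun t => Real.exp (a l + t * c l)) (c l * Real.exp (a l + t * c l)) t := by
    intro l t
    have h1 : HasDerivAt (fun t : ℝ => a l + t * c l) (c l) t := by
      simpa using ((hasDerivAt_id t).mul_const (c l)).const_add (a l)
    simpa [mul_comm] using h1.exp
  have hSd : ∀ t, HasDerivAt S (∑ l : Fin J, c l * Real.exp (a l + t * c l)) t := by
    intro t
    exact HasDerivAt.fun_sum fun l _ => hN l t
  set f' : ℝ → ℝ := fun t =>
    (c j * Real.exp (a j + t * c j) * S t -
      Real.exp (a j + t * c j) * ∑ l : Fin J, c l * Real.exp (a l + t * c l)) / S t ^ 2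
    with hf'def
  have hf : ∀ t, HasDerivAt f (f' t) t := fun t =>
    (hN j t).div (hSd t) (ne_of_gt (hS t))
  have bound : ∀ t ∈ Set.Ico (0 : ℝ) 1, ‖f' t‖ ≤ K := by
    intro t _
    have hNum : c j * Real.exp (a j + t * c j) * S t -
        Real.exp (a j + t * c j) * ∑ l : Fin J, c l * Real.exp (a l + t * c l)
        = Real.exp (a j + t * c j) * ∑ l : Fin J, (c j - c l) * Real.exp (a l + t * c l) := by
      simp only [hSdef, Finset.mul_sum]
      rw [← Finset.sum_sub_distrib]
      exact Finset.sum_congr rfl fun l _ => by ring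
    have habs : |∑ l : Fin J, (c j - c l) * Real.exp (a l + t * c l)| ≤ K * S t := by
      calc |∑ l : Fin J, (c j - c l) * Real.exp (a l + t * c l)|
          ≤ ∑ l : Fin J, |(c j - c l) * Real.exp (a l + t * c l)| :=
            Finset.abs_sum_le_sum_abs _ _
        _ ≤ ∑ l : Fin J, K * Real.exp (a l + t * c l) := by
            refine Finset.sum_le_sum fun l _ => ?_
            rw [abs_mul, abs_of_pos (Real.exp_pos _)]
            exact mul_le_mul_of_nonneg_right (hK l) (Real.exp_pos _).le
        _ = K * S t := by rw [hSdef, Finset.mul_sum]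
    have hNle : Real.exp (a j + t * c j) ≤ S t :=
      Finset.single_le_sum (f := fun l => Real.exp (a l + t * c l))
        (fun l _ => (Real.exp_pos _).le) (Finset.mem_univ j)
    rw [Real.norm_eq_abs, hf'def]
    simp only
    rw [abs_div, abs_of_pos (pow_pos (hS t) 2), div_le_iff₀ (pow_pos (hS t) 2)]
    rw [hNum, abs_mul, abs_of_pos (Real.exp_pos _)]
    calc Real.exp (a j + t * c j) * |∑ l : Fin J, (c j - c l) * Real.exp (a l + t * c l)|
        ≤ S t * (K * S t) := by
          exact mul_le_mul hNle habs (abs_nonneg _) (hS t).le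
      _ = K * S t ^ 2 := by ring
  have := norm_image_sub_le_of_norm_deriv_le_segment_01'
    (f' := f') (f := f) (fun t _ => (hf t).hasDerivWithinAt) bound
  simpa [hfdef, hSdef, Real.norm_eq_abs] using this

/-- the multinomial logit kernel is Lipschitz in `β` with Lipschitz
constant `K_x = max_{1 ≤ i ≤ J} |x_j − x_i|`. -/
theorem mlogit_lipschitz {d J : ℕ} (hJ : 2 ≤ J)
    (x : Fin J → EuclideanSpace ℝ (Fin d)) (j : Fin J)
    (β₁ β₂ : EuclideanSpace ℝ (Fin d)) :
    |mlogit j x β₁ - mlogit j x β₂| ≤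
      (Finset.univ.sup' ⟨j, Finset.mem_univ j⟩ fun i => ‖x j - x i‖) * ‖β₁ - β₂‖ := by
  set K : ℝ := (Finset.univ.sup' ⟨j, Finset.mem_univ j⟩ fun i => ‖x j - x i‖) * ‖β₁ - β₂‖
  set a : Fin J → ℝ := fun l => (inner ℝ (x l) β₂ : ℝ)
  set c : Fin J → ℝ := fun l => (inner ℝ (x l) (β₁ - β₂) : ℝ)
  have hac : ∀ l, a l + c l = (inner ℝ (x l) β₁ : ℝ) := by
    intro l
    simp only [a, c, inner_sub_right]
    ring
  have hK : ∀ l, |c j - c l| ≤ K := by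
    intro l
    have h1 : c j - c l = (inner ℝ (x j - x l) (β₁ - β₂) : ℝ) := by
      simp [a, c, inner_sub_left]
    rw [h1]
    calc |(inner ℝ (x j - x l) (β₁ - β₂) : ℝ)| ≤ ‖x j - x l‖ * ‖β₁ - β₂‖ :=
          abs_real_inner_le_norm _ _
      _ ≤ K := mul_le_mul_of_nonneg_right
          (Finset.le_sup' (fun i => ‖x j - x i‖) (Finset.mem_univ l)) (norm_nonneg _)
  have := mlogit_aux a c j hK
  simp only [hac] at this
  simpa [mlogit, a] using this

end
end

section
/- Fix j ∈ {1, …, J} and δ ∈ (0, 1). There exists a constant K_δ < ∞, depending only on δ, d, J and 𝒳, such that for every a ≥ 1 there exist Borel probability measures G_1, …, G_m on ℝ^d with log m ≤ K_δ a^d and with the property that every Borel probability measure G on ℝ^d with G({β : |β| ≤ a}) ≥ 1 − δ satisfies min_{1 ≤ i ≤ m} ∫_𝒳 |q_j(x; G) − q_j(x; G_i)| M(dx) < 3δ. -/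
open MeasureTheory ProbabilityTheory Filter Real
open scoped ENNReal

noncomputable section

variable {d J : ℕ}

lemma sum_exp_pos (x : Fin J → EuclideanSpace ℝ (Fin d)) (j : Fin J)
    (β : EuclideanSpace ℝ (Fin d)) :
    0 < ∑ l : Fin J, Real.exp (inner ℝ (x l) β : ℝ) := by
  have : (Finset.univ : Finset (Fin J)).Nonempty := ⟨j, Finset.mem_univ _⟩
  exact Finset.sum_pos (fun _ _ => Real.exp_pos _) this

lemma mlogit_nonneg (j : Fin J) (x : Fin J → EuclideanSpace ℝ (Fin d))
    (β : EuclideanSpace ℝ (Fin d)) : 0 ≤ mlogit j x β :=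
  div_nonneg (Real.exp_pos _).le (Finset.sum_nonneg fun _ _ => (Real.exp_pos _).le)

lemma mlogit_le_one (j : Fin J) (x : Fin J → EuclideanSpace ℝ (Fin d))
    (β : EuclideanSpace ℝ (Fin d)) : mlogit j x β ≤ 1 := by
  have hpos := sum_exp_pos x j β
  have hle : Real.exp (inner ℝ (x j) β : ℝ) ≤ ∑ l : Fin J, Real.exp (inner ℝ (x l) β : ℝ) :=
    Finset.single_le_sum (f := fun l => Real.exp (inner ℝ (x l) β : ℝ)) (fun l _ => (Real.exp_pos _).le) (Finset.mem_univ j)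
  exact div_le_one_of_le₀ hle hpos.le

lemma mlogit_continuous (j : Fin J) :
    Continuous (fun p : (Fin J → EuclideanSpace ℝ (Fin d)) × EuclideanSpace ℝ (Fin d) =>
      mlogit j p.1 p.2) := by
  have hc : ∀ l : Fin J, Continuous (fun p : (Fin J → EuclideanSpace ℝ (Fin d)) × EuclideanSpace ℝ (Fin d) => (inner ℝ (p.1 l) p.2 : ℝ)) := by
    intro l
    exact Continuous.inner ((continuous_apply l).comp continuous_fst) continuous_snd
  apply Continuous.div
  · exact (hc j).rexp
  · exact continuous_finset_sum _ fun l _ => (hc l).rexp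
  · intro p
    exact (sum_exp_pos p.1 j p.2).ne'

lemma mlogit_ratio_le {R t : ℝ} (j : Fin J) (x : Fin J → EuclideanSpace ℝ (Fin d))
    (β β' : EuclideanSpace ℝ (Fin d)) (hx : ∀ l, ‖x l‖ ≤ R)
    (ht : R * ‖β - β'‖ ≤ t) :
    mlogit j x β - mlogit j x β' ≤ Real.exp (2 * t) - 1 := by
  have ht0 : 0 ≤ t := le_trans (mul_nonneg ((norm_nonneg (x j)).trans (hx j)) (norm_nonneg _)) ht
  have key : ∀ l : Fin J, |(inner ℝ (x l) β : ℝ) - (inner ℝ (x l) β' : ℝ)| ≤ t := by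
    intro l
    have h1 : (inner ℝ (x l) β : ℝ) - (inner ℝ (x l) β' : ℝ) = (inner ℝ (x l) (β - β') : ℝ) := by
      rw [inner_sub_right]
    rw [h1]
    calc |(inner ℝ (x l) (β - β') : ℝ)| ≤ ‖x l‖ * ‖β - β'‖ := abs_real_inner_le_norm _ _
      _ ≤ R * ‖β - β'‖ := mul_le_mul_of_nonneg_right (hx l) (norm_nonneg _)
      _ ≤ t := ht
  have Su := sum_exp_pos x j β
  have Sv := sum_exp_pos x j β'
  have hnum : Real.exp (inner ℝ (x j) β : ℝ) ≤ Real.exp t * Real.exp (inner ℝ (x j) β' : ℝ) := by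
    rw [← Real.exp_add]
    exact Real.exp_le_exp.2 (by linarith [abs_le.1 (key j) |>.2])
  have hden : Real.exp (-t) * (∑ l : Fin J, Real.exp (inner ℝ (x l) β' : ℝ)) ≤
      ∑ l : Fin J, Real.exp (inner ℝ (x l) β : ℝ) := by
    rw [Finset.mul_sum]
    apply Finset.sum_le_sum
    intro l _
    rw [← Real.exp_add]
    exact Real.exp_le_exp.2 (by linarith [abs_le.1 (key l) |>.1])
  have hle : mlogit j x β ≤ Real.exp (2 * t) * mlogit j x β' := by
    rw [mlogit, mlogit]
    calc Real.exp (inner ℝ (x j) β : ℝ) / ∑ l : Fin J, Real.exp (inner ℝ (x l) β : ℝ)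
        ≤ Real.exp t * Real.exp (inner ℝ (x j) β' : ℝ) /
          (Real.exp (-t) * ∑ l : Fin J, Real.exp (inner ℝ (x l) β' : ℝ)) := by
          apply div_le_div₀ (by positivity) hnum (by positivity) hden
      _ = Real.exp (2 * t) * (Real.exp (inner ℝ (x j) β' : ℝ) / ∑ l : Fin J, Real.exp (inner ℝ (x l) β' : ℝ)) := by
          rw [Real.exp_neg, two_mul, Real.exp_add, div_eq_mul_inv, mul_inv, inv_inv,
            div_eq_mul_inv]
          ring
  have h1 : mlogit j x β' ≤ 1 := mlogit_le_one j x β'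
  have h0 : 0 ≤ mlogit j x β' := mlogit_nonneg j x β'
  have he : 1 ≤ Real.exp (2 * t) := by
    rw [← Real.exp_zero]; exact Real.exp_le_exp.2 (by linarith)
  nlinarith

lemma mlogit_abs_sub_le {R t : ℝ} (j : Fin J) (x : Fin J → EuclideanSpace ℝ (Fin d))
    (β β' : EuclideanSpace ℝ (Fin d)) (hx : ∀ l, ‖x l‖ ≤ R)
    (ht : R * ‖β - β'‖ ≤ t) :
    |mlogit j x β - mlogit j x β'| ≤ Real.exp (2 * t) - 1 := by
  rw [abs_sub_le_iff]
  refine ⟨mlogit_ratio_le j x β β' hx ht, mlogit_ratio_le j x β' β hx ?_⟩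
  rwa [norm_sub_rev]



section Var
variable {ι : Type*} [Fintype ι] [DecidableEq ι]

lemma sum_prod_weights (T : ℕ) (p : ι → ℝ) (hp1 : ∑ f, p f = 1) :
    ∑ w : Fin T → ι, ∏ s, p (w s) = 1 := by
  have h := Finset.prod_univ_sum (fun _ : Fin T => (Finset.univ : Finset ι)) (fun _ f => p f)
  rw [Fintype.piFinset_univ] at h
  rw [← h]
  simp [hp1]

lemma empirical_var_bound {T : ℕ} (hT : 0 < T)
    (p h : ι → ℝ) (hp0 : ∀ f, 0 ≤ p f) (hp1 : ∑ f, p f = 1)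
    (hh : ∀ f, (h f - ∑ f', p f' * h f') ^ 2 ≤ 1) :
    ∑ w : Fin T → ι, (∏ s, p (w s)) * ((T : ℝ)⁻¹ * ∑ s, h (w s) - ∑ f, p f * h f) ^ 2
      ≤ (T : ℝ)⁻¹ := by
  set μ := ∑ f, p f * h f with hμ
  have hTne : (T : ℝ) ≠ 0 := Nat.cast_ne_zero.2 hT.ne'
  have hz : ∑ f, p f * (h f - μ) = 0 := by
    have : ∑ f, p f * (h f - μ) = (∑ f, p f * h f) - (∑ f, p f) * μ := by
      rw [Finset.sum_mul, ← Finset.sum_sub_distrib]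
      exact Finset.sum_congr rfl fun f _ => by ring
    rw [this, hp1]; ring
  set m2 := ∑ f, p f * (h f - μ) ^ 2 with hm2
  have hm2le : m2 ≤ 1 := by
    calc m2 ≤ ∑ f, p f := Finset.sum_le_sum fun f _ =>
          mul_le_of_le_one_right (hp0 f) (hh f)
      _ = 1 := hp1
  have hm2nn : 0 ≤ m2 := Finset.sum_nonneg fun f _ => mul_nonneg (hp0 f) (sq_nonneg _)
  -- inner factorization
  have inner_eq : ∀ s t : Fin T,
      ∑ w : Fin T → ι, (∏ u, p (w u)) * ((h (w s) - μ) * (h (w t) - μ))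
        = if s = t then m2 else 0 := by
    intro s t
    set c : Fin T → ι → ℝ := fun u f =>
      p f * ((if u = s then h f - μ else 1) * (if u = t then h f - μ else 1)) with hc
    have hw : ∀ w : Fin T → ι,
        (∏ u, p (w u)) * ((h (w s) - μ) * (h (w t) - μ)) = ∏ u, c u (w u) := by
      intro w
      have : (∏ u, c u (w u)) = (∏ u, p (w u)) *
          ((∏ u : Fin T, if u = s then h (w u) - μ else 1) *
           (∏ u : Fin T, if u = t then h (w u) - μ else 1)) := by
        rw [← Finset.prod_mul_distrib, ← Finset.prod_mul_distrib]
      rw [this, Finset.prod_ite_eq' Finset.univ s (fun u => h (w u) - μ),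
        Finset.prod_ite_eq' Finset.univ t (fun u => h (w u) - μ)]
      simp
    have hfact : ∑ w : Fin T → ι, ∏ u, c u (w u) = ∏ u, ∑ f, c u f := by
      have h2 := Finset.prod_univ_sum (fun _ : Fin T => (Finset.univ : Finset ι)) c
      rw [Fintype.piFinset_univ] at h2
      exact h2.symm
    rw [Finset.sum_congr rfl fun w _ => hw w, hfact]
    by_cases hst : s = t
    · subst hst
      rw [if_pos rfl]
      have hcu : ∀ u : Fin T, ∑ f, c u f = if u = s then m2 else 1 := by
        intro u
        by_cases hu : u = s
        · subst hu
          rw [if_pos rfl, hm2]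
          apply Finset.sum_congr rfl
          intro f _
          simp only [hc, eq_self_iff_true, if_true]
          ring
        · rw [if_neg hu]
          have : ∀ f, c u f = p f := by
            intro f
            simp only [hc]
            rw [if_neg hu]
            ring
          rw [Finset.sum_congr rfl fun f _ => this f, hp1]
      rw [Finset.prod_congr rfl fun u _ => hcu u,
        Finset.prod_ite_eq' Finset.univ s (fun _ => m2)]
      simp
    · rw [if_neg hst]
      apply Finset.prod_eq_zero (Finset.mem_univ s)
      have : ∀ f, c s f = p f * (h f - μ) := by
        intro f
        simp only [hc, eq_self_iff_true, if_true, if_neg hst]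
        ring
      rw [Finset.sum_congr rfl fun f _ => this f, hz]
  -- expansion
  have h1 : ∀ w : Fin T → ι,
      (T : ℝ)⁻¹ * ∑ s, h (w s) - μ = (T : ℝ)⁻¹ * ∑ s : Fin T, (h (w s) - μ) := by
    intro w
    rw [Finset.sum_sub_distrib, Finset.sum_const, Finset.card_univ, Fintype.card_fin, nsmul_eq_mul]
    field_simp
  calc ∑ w : Fin T → ι, (∏ s, p (w s)) * ((T : ℝ)⁻¹ * ∑ s, h (w s) - μ) ^ 2
      = ∑ w : Fin T → ι, ∑ s : Fin T, ∑ t : Fin T,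
          (T : ℝ)⁻¹ ^ 2 * ((∏ u, p (w u)) * ((h (w s) - μ) * (h (w t) - μ))) := by
        apply Finset.sum_congr rfl
        intro w _
        rw [h1 w, mul_pow, sq (∑ s : Fin T, (h (w s) - μ)), Finset.sum_mul_sum]
        simp only [Finset.mul_sum]
        apply Finset.sum_congr rfl
        intro s _
        apply Finset.sum_congr rfl
        intro t _
        ring
    _ = ∑ s : Fin T, ∑ t : Fin T, ∑ w : Fin T → ι,
          (T : ℝ)⁻¹ ^ 2 * ((∏ u, p (w u)) * ((h (w s) - μ) * (h (w t) - μ))) := by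
        rw [Finset.sum_comm]
        exact Finset.sum_congr rfl fun s _ => Finset.sum_comm
    _ = ∑ s : Fin T, ∑ t : Fin T, (T : ℝ)⁻¹ ^ 2 * (if s = t then m2 else 0) := by
        apply Finset.sum_congr rfl
        intro s _
        apply Finset.sum_congr rfl
        intro t _
        rw [← Finset.mul_sum, inner_eq s t]
    _ = ∑ s : Fin T, (T : ℝ)⁻¹ ^ 2 * m2 := by
        apply Finset.sum_congr rfl
        intro s _
        simp only [mul_ite, mul_zero]
        rw [Finset.sum_ite_eq Finset.univ s (fun _ => (T : ℝ)⁻¹ ^ 2 * m2)]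
        simp
    _ = (T : ℝ) * ((T : ℝ)⁻¹ ^ 2 * m2) := by
        rw [Finset.sum_const, Finset.card_univ, Fintype.card_fin, nsmul_eq_mul]
    _ ≤ (T : ℝ) * ((T : ℝ)⁻¹ ^ 2 * 1) := by
        apply mul_le_mul_of_nonneg_left _ (by positivity)
        exact mul_le_mul_of_nonneg_left hm2le (by positivity)
    _ = (T : ℝ)⁻¹ := by field_simp

lemma empirical_abs_bound {T : ℕ} (hT : 0 < T)
    (p h : ι → ℝ) (hp0 : ∀ f, 0 ≤ p f) (hp1 : ∑ f, p f = 1)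
    (hh : ∀ f, (h f - ∑ f', p f' * h f') ^ 2 ≤ 1) :
    ∑ w : Fin T → ι, (∏ s, p (w s)) * |(T : ℝ)⁻¹ * ∑ s, h (w s) - ∑ f, p f * h f|
      ≤ Real.sqrt (T : ℝ)⁻¹ := by
  set μ := ∑ f, p f * h f
  set Δ : (Fin T → ι) → ℝ := fun w => (T : ℝ)⁻¹ * ∑ s, h (w s) - μ with hΔ
  set P : (Fin T → ι) → ℝ := fun w => ∏ s, p (w s) with hP
  have hPnn : ∀ w, 0 ≤ P w := fun w => Finset.prod_nonneg fun s _ => hp0 (w s)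
  have hS1nn : 0 ≤ ∑ w : Fin T → ι, P w * |Δ w| :=
    Finset.sum_nonneg fun w _ => mul_nonneg (hPnn w) (abs_nonneg _)
  have hCS : (∑ w : Fin T → ι, P w * |Δ w|) ^ 2 ≤
      (∑ w : Fin T → ι, P w) * ∑ w : Fin T → ι, P w * Δ w ^ 2 := by
    have h := Finset.sum_mul_sq_le_sq_mul_sq Finset.univ
      (fun w : Fin T → ι => Real.sqrt (P w))
      (fun w : Fin T → ι => Real.sqrt (P w) * |Δ w|)
    have e1 : ∀ w : Fin T → ι, Real.sqrt (P w) * (Real.sqrt (P w) * |Δ w|) = P w * |Δ w| := by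
      intro w
      rw [← mul_assoc, Real.mul_self_sqrt (hPnn w)]
    have e2 : ∀ w : Fin T → ι, Real.sqrt (P w) ^ 2 = P w := fun w => Real.sq_sqrt (hPnn w)
    have e3 : ∀ w : Fin T → ι, (Real.sqrt (P w) * |Δ w|) ^ 2 = P w * Δ w ^ 2 := by
      intro w
      rw [mul_pow, Real.sq_sqrt (hPnn w), sq_abs]
    rw [Finset.sum_congr rfl fun w _ => e1 w, Finset.sum_congr rfl fun w _ => e2 w,
      Finset.sum_congr rfl fun w _ => e3 w] at h
    exact h
  have hvar := empirical_var_bound hT p h hp0 hp1 hh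
  have hsum1 : ∑ w : Fin T → ι, P w = 1 := sum_prod_weights T p hp1
  rw [hsum1, one_mul] at hCS
  have h2 : (∑ w : Fin T → ι, P w * |Δ w|) ^ 2 ≤ (T : ℝ)⁻¹ := le_trans hCS hvar
  calc ∑ w : Fin T → ι, P w * |Δ w|
      = Real.sqrt ((∑ w : Fin T → ι, P w * |Δ w|) ^ 2) := (Real.sqrt_sq hS1nn).symm
    _ ≤ Real.sqrt (T : ℝ)⁻¹ := Real.sqrt_le_sqrt h2

end Var


abbrev Grid (d n : ℕ) : Type := Fin d → {z : ℤ // z ∈ Finset.Icc (-(n:ℤ)) (n:ℤ)}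

def gpt {d : ℕ} (n : ℕ) (η' : ℝ) (f : Grid d n) : EuclideanSpace ℝ (Fin d) :=
  WithLp.toLp 2 (fun i => η' * ((f i : ℤ) : ℝ))

def snap {d : ℕ} (n : ℕ) (η' : ℝ) (β : EuclideanSpace ℝ (Fin d)) : Grid d n :=
  fun i => ⟨max (-(n:ℤ)) (min (n:ℤ) ⌊β i / η' + 1/2⌋), by
    simp only [Finset.mem_Icc]
    omega⟩

lemma snap_measurable {d : ℕ} (n : ℕ) (η' : ℝ) :
    Measurable (snap (d := d) n η') := by
  apply measurable_pi_lambda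
  intro i
  apply Measurable.subtype_mk
  have hcoord : Measurable (fun β : EuclideanSpace ℝ (Fin d) => β i) :=
    (EuclideanSpace.proj (𝕜 := ℝ) i).continuous.measurable
  exact measurable_const.max (measurable_const.min ((hcoord.div_const η').add_const (1/2)).floor)

lemma card_grid (d n : ℕ) : Fintype.card (Grid d n) = (2 * n + 1) ^ d := by
  rw [Fintype.card_fun]
  congr 1
  · rw [Fintype.card_coe, Int.card_Icc]
    omega
  · exact Fintype.card_fin d

lemma gpt_snap_close {d n : ℕ} {η' a : ℝ} (hη' : 0 < η') (hn : a ≤ n * η')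
    (β : EuclideanSpace ℝ (Fin d)) (hβ : ‖β‖ ≤ a) :
    ‖gpt n η' (snap n η' β) - β‖ ≤ Real.sqrt d * (η' / 2) := by
  have hcoord : ∀ i, |β i| ≤ n * η' := by
    intro i
    have h1 : |β i| ≤ ‖β‖ := by
      rw [EuclideanSpace.norm_eq, show |β i| = Real.sqrt (β i ^ 2) from (Real.sqrt_sq_eq_abs _).symm]
      apply Real.sqrt_le_sqrt
      rw [show β i ^ 2 = ‖β i‖ ^ 2 by rw [Real.norm_eq_abs, sq_abs]]
      exact Finset.single_le_sum (f := fun l => ‖β l‖ ^ 2)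
        (fun l _ => sq_nonneg _) (Finset.mem_univ i)
    linarith
  have hdist : ∀ i, |(gpt n η' (snap n η' β) - β) i| ≤ η' / 2 := by
    intro i
    set z := ⌊β i / η' + 1/2⌋ with hz
    have hz1 : (z : ℝ) ≤ β i / η' + 1/2 := Int.floor_le _
    have hz2 : β i / η' + 1/2 < z + 1 := Int.lt_floor_add_one _
    have hb1 : β i / η' ≤ (n : ℝ) := by
      rw [div_le_iff₀ hη']
      have := (abs_le.1 (hcoord i)).2
      linarith
    have hb2 : -(n:ℝ) ≤ β i / η' := by
      rw [le_div_iff₀ hη']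
      have := (abs_le.1 (hcoord i)).1
      linarith
    have hzu : z ≤ (n:ℤ) := by
      have : (z:ℝ) < (n:ℝ) + 1 := by linarith
      exact_mod_cast Int.lt_add_one_iff.1 (by exact_mod_cast this)
    have hzl : -(n:ℤ) ≤ z := by
      have : (-(n:ℝ)) - 1 < (z:ℝ) := by linarith
      have h2 : ((-(n:ℤ) - 1 : ℤ) : ℝ) < (z:ℝ) := by push_cast; linarith
      have h3 : (-(n:ℤ) - 1 : ℤ) < z := by exact_mod_cast h2
      omega
    have hclamp : max (-(n:ℤ)) (min (n:ℤ) z) = z := by omega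
    have happ : (gpt n η' (snap n η' β) - β) i = η' * (z:ℝ) - β i := by
      have : (gpt n η' (snap n η' β)) i = η' * ((max (-(n:ℤ)) (min (n:ℤ) z) : ℤ) : ℝ) := rfl
      rw [show (gpt n η' (snap n η' β) - β) i = (gpt n η' (snap n η' β)) i - β i from rfl,
        this, hclamp]
    rw [happ, abs_le]
    have hdiv : η' * (β i / η') = β i := by field_simp
    have hu := mul_le_mul_of_nonneg_left hz1 hη'.le
    have hl := mul_lt_mul_of_pos_left hz2 hη'
    rw [mul_add] at hu hl
    rw [hdiv] at hu hl
    rw [mul_add] at hl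
    constructor
    · linarith
    · linarith
  rw [EuclideanSpace.norm_eq]
  have hsum : ∑ i, ‖(gpt n η' (snap n η' β) - β) i‖ ^ 2 ≤ (d : ℝ) * (η' / 2) ^ 2 := by
    calc ∑ i, ‖(gpt n η' (snap n η' β) - β) i‖ ^ 2
        ≤ ∑ _i : Fin d, (η' / 2) ^ 2 := by
          apply Finset.sum_le_sum
          intro i _
          rw [Real.norm_eq_abs]
          exact pow_le_pow_left₀ (abs_nonneg _) (hdist i) 2
      _ = (d : ℝ) * (η' / 2) ^ 2 := by
          rw [Finset.sum_const, Finset.card_univ, Fintype.card_fin, nsmul_eq_mul]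
  calc Real.sqrt (∑ i, ‖(gpt n η' (snap n η' β) - β) i‖ ^ 2)
      ≤ Real.sqrt ((d : ℝ) * (η' / 2) ^ 2) := Real.sqrt_le_sqrt hsum
    _ = Real.sqrt d * (η' / 2) := by
        rw [Real.sqrt_mul (Nat.cast_nonneg d), Real.sqrt_sq (by positivity)]

variable {d J : ℕ}

lemma mlogit_continuous_beta (j : Fin J) (x : Fin J → EuclideanSpace ℝ (Fin d)) :
    Continuous (fun β => mlogit j x β) := by
  have hc : ∀ l : Fin J, Continuous
      (fun β : EuclideanSpace ℝ (Fin d) => (inner ℝ (x l) β : ℝ)) :=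
    fun l => Continuous.inner continuous_const continuous_id
  apply Continuous.div
  · exact (hc j).rexp
  · exact continuous_finset_sum _ fun l _ => (hc l).rexp
  · intro β
    exact (sum_exp_pos x j β).ne'

lemma mlogit_continuous_x (j : Fin J) (c : EuclideanSpace ℝ (Fin d)) :
    Continuous (fun x : Fin J → EuclideanSpace ℝ (Fin d) => mlogit j x c) := by
  have hc : ∀ l : Fin J, Continuous
      (fun x : Fin J → EuclideanSpace ℝ (Fin d) => (inner ℝ (x l) c : ℝ)) :=
    fun l => Continuous.inner (continuous_apply l) continuous_const
  apply Continuous.div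
  · exact (hc j).rexp
  · exact continuous_finset_sum _ fun l _ => (hc l).rexp
  · intro x
    exact (sum_exp_pos x j c).ne'

lemma integrable_mlogit (j : Fin J) (x : Fin J → EuclideanSpace ℝ (Fin d))
    (μ : Measure (EuclideanSpace ℝ (Fin d))) [IsFiniteMeasure μ] :
    Integrable (fun β => mlogit j x β) μ := by
  apply Integrable.mono' (integrable_const 1)
    ((mlogit_continuous_beta j x).aestronglyMeasurable)
  filter_upwards with β
  rw [Real.norm_eq_abs, abs_of_nonneg (mlogit_nonneg _ _ _)]
  exact mlogit_le_one _ _ _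

lemma choiceProb_nonneg (j : Fin J) (x : Fin J → EuclideanSpace ℝ (Fin d))
    (μ : Measure (EuclideanSpace ℝ (Fin d))) : 0 ≤ choiceProb j x μ :=
  integral_nonneg fun β => mlogit_nonneg _ _ _

lemma choiceProb_le_one (j : Fin J) (x : Fin J → EuclideanSpace ℝ (Fin d))
    (μ : Measure (EuclideanSpace ℝ (Fin d))) [IsProbabilityMeasure μ] :
    choiceProb j x μ ≤ 1 := by
  have h1 : choiceProb j x μ ≤ ∫ _β, (1:ℝ) ∂μ := by
    apply integral_mono (integrable_mlogit j x μ) (integrable_const 1)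
    intro β
    exact mlogit_le_one _ _ _
  simpa using h1

set_option maxHeartbeats 1000000 in
/-- metric entropy bound for mixing distributions putting mass at least
`1 − δ` on the ball of radius `a`: there is a constant `K_δ` such that for every `a ≥ 1`
the class admits a `3δ`-net of cardinality `m` with `log m ≤ K_δ aᵈ`. -/
theorem entropy_bound_almost_compact_support {d J : ℕ} (hJ : 2 ≤ J)
    (𝒳 : Set (Fin J → EuclideanSpace ℝ (Fin d))) (h𝒳 : IsCompact 𝒳)
    (M : Measure (Fin J → EuclideanSpace ℝ (Fin d))) [IsProbabilityMeasure M]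
    (hM : M 𝒳ᶜ = 0)
    (j : Fin J) (δ : ℝ) (hδ : δ ∈ Set.Ioo (0 : ℝ) 1) :
    ∃ Kδ : ℝ, ∀ a : ℝ, 1 ≤ a →
      ∃ (m : ℕ) (Gs : Fin m → ProbabilityMeasure (EuclideanSpace ℝ (Fin d))),
        Real.log m ≤ Kδ * a ^ d ∧
          ∀ G : ProbabilityMeasure (EuclideanSpace ℝ (Fin d)),
            ENNReal.ofReal (1 - δ) ≤
              (G : Measure (EuclideanSpace ℝ (Fin d))) {β | ‖β‖ ≤ a} →
              ∃ i : Fin m,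
                ∫ x in 𝒳, |choiceProb j x G - choiceProb j x (Gs i)| ∂M < 3 * δ := by
  obtain ⟨hδ0, hδ1⟩ := hδ
  -- a uniform bound on the covariates
  obtain ⟨R0, hR0⟩ := h𝒳.isBounded.subset_closedBall 0
  set R := max R0 0 with hRdef
  have hRnn : (0:ℝ) ≤ R := le_max_right _ _
  have hR : ∀ x ∈ 𝒳, ∀ l, ‖x l‖ ≤ R := by
    intro x hx l
    have h2 : ‖x‖ ≤ R0 := by
      have := hR0 hx
      rwa [Metric.mem_closedBall, dist_zero_right] at this
    exact (norm_le_pi_norm x l).trans (h2.trans (le_max_left _ _))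
  -- the Lipschitz scale η and the grid mesh η'
  set η := Real.log (1 + δ/2) / (2*(R+1)) with hηdef
  have hη : 0 < η := div_pos (Real.log_pos (by linarith)) (by linarith)
  have hexpkey : Real.exp (2*((R+1)*η)) - 1 = δ/2 := by
    rw [show 2*((R+1)*η) = Real.log (1 + δ/2) by rw [hηdef]; field_simp]
    rw [Real.exp_log (by linarith)]
    ring
  set η' := η / (Real.sqrt d + 1) with hη'def
  have hsd : (0:ℝ) ≤ Real.sqrt d := Real.sqrt_nonneg _
  have hη' : 0 < η' := div_pos hη (by linarith)
  have hgridfine : Real.sqrt d * (η'/2) ≤ η := by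
    have h2 : (Real.sqrt d + 1) * η' = η := by
      rw [hη'def]
      field_simp
    nlinarith [hη'.le]
  -- the number of samples T
  set T := (⌈2/δ⌉₊ + 1)^2 with hTdef
  have hTpos : 0 < T := by positivity
  have hsqrtT : Real.sqrt ((T:ℝ)⁻¹) < δ/2 := by
    have hc : (2:ℝ)/δ < ((⌈2/δ⌉₊ + 1 : ℕ):ℝ) := by
      push_cast
      have := Nat.le_ceil (2/δ)
      linarith
    have hcpos : (0:ℝ) < ((⌈2/δ⌉₊ + 1 : ℕ):ℝ) := by positivity
    have hTc : ((T:ℕ):ℝ) = ((⌈2/δ⌉₊ + 1 : ℕ):ℝ)^2 := by rw [hTdef]; push_cast; ring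
    rw [Real.sqrt_inv, hTc, Real.sqrt_sq hcpos.le]
    have h2δ : (0:ℝ) < 2/δ := by positivity
    calc (((⌈2/δ⌉₊ + 1 : ℕ):ℝ))⁻¹ < (2/δ)⁻¹ := by
          apply inv_strictAnti₀ h2δ hc
      _ = δ/2 := by rw [inv_div]
  -- the entropy constant
  set C₁ := 2/η' + 3 with hC₁def
  have hC₁ : 0 < C₁ := by positivity
  refine ⟨(d*T : ℕ) * (max (Real.log C₁) 0 + 1), ?_⟩
  intro a ha
  have ha0 : (0:ℝ) < a := by linarith
  set n := ⌈a/η'⌉₊ with hndef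
  have hna : a ≤ n * η' := by
    have h1 := Nat.le_ceil (a/η')
    calc a = (a/η')*η' := by field_simp
      _ ≤ n * η' := mul_le_mul_of_nonneg_right h1 hη'.le
  -- the candidate measures
  set m := Fintype.card (Fin T → Grid d n) with hmdef
  set e := (Fintype.equivFin (Fin T → Grid d n)).symm with hedef
  set c : Grid d n → EuclideanSpace ℝ (Fin d) := gpt n η' with hcdef
  set Gw : (Fin T → Grid d n) → Measure (EuclideanSpace ℝ (Fin d)) :=
    fun w => ((T : ENNReal))⁻¹ • ∑ s' : Fin T, Measure.dirac (c (w s')) with hGwdef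
  have hGwprob : ∀ w, IsProbabilityMeasure (Gw w) := by
    intro w
    constructor
    rw [hGwdef]
    simp only [Measure.smul_apply, Measure.finset_sum_apply, measure_univ, smul_eq_mul]
    rw [Finset.sum_const, Finset.card_univ, Fintype.card_fin, nsmul_eq_mul, mul_one]
    exact ENNReal.inv_mul_cancel (by exact_mod_cast hTpos.ne') (by simp)
  refine ⟨m, fun i => ⟨Gw (e i), hGwprob _⟩, ?_, ?_⟩
  · -- the entropy bound
    have hmcard : m = (2*n+1)^(d*T) := by
      rw [hmdef, Fintype.card_fun, card_grid, Fintype.card_fin, pow_mul]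
    rw [hmcard]
    have hlogm : Real.log (((2*n+1)^(d*T) : ℕ) : ℝ)
        = ((d*T : ℕ):ℝ) * Real.log ((2*n+1 : ℕ):ℝ) := by
      push_cast
      rw [Real.log_pow]
      push_cast
      ring
    rw [hlogm]
    rcases Nat.eq_zero_or_pos d with hd0 | hd1
    · subst hd0
      simp
    · have h1pow : (1:ℝ) ≤ a^d := one_le_pow₀ ha
      have h2n : ((2*n+1 : ℕ):ℝ) ≤ C₁ * a := by
        have hceil : ((n:ℕ):ℝ) < a/η' + 1 := Nat.ceil_lt_add_one (by positivity)
        have heq : 2*(a/η') = (2/η')*a := by ring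
        push_cast
        have h3a : (3:ℝ) ≤ 3*a := by linarith
        rw [hC₁def]
        nlinarith
      have h2npos : (0:ℝ) < ((2*n+1 : ℕ):ℝ) := by positivity
      have hlog : Real.log ((2*n+1:ℕ):ℝ) ≤ Real.log C₁ + Real.log a := by
        calc Real.log ((2*n+1:ℕ):ℝ) ≤ Real.log (C₁ * a) := Real.log_le_log h2npos h2n
          _ = Real.log C₁ + Real.log a := Real.log_mul hC₁.ne' ha0.ne'
      have hloga : Real.log a ≤ a := by
        have := Real.log_le_sub_one_of_pos ha0
        linarith
      have hapow : a ≤ a^d := by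
        calc a = a^1 := (pow_one a).symm
          _ ≤ a^d := pow_le_pow_right₀ ha hd1
      have hmax1 : Real.log C₁ ≤ max (Real.log C₁) 0 := le_max_left _ _
      have hmax0 : (0:ℝ) ≤ max (Real.log C₁) 0 := le_max_right _ _
      have hdT : (0:ℝ) ≤ ((d*T : ℕ):ℝ) := Nat.cast_nonneg _
      calc ((d*T : ℕ):ℝ) * Real.log ((2*n+1 : ℕ):ℝ)
          ≤ ((d*T : ℕ):ℝ) * ((max (Real.log C₁) 0 + 1) * a^d) := by
            apply mul_le_mul_of_nonneg_left _ hdT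
            nlinarith
        _ = ((d*T : ℕ):ℝ) * (max (Real.log C₁) 0 + 1) * a^d := by ring
  · -- the net property
    intro G hG
    haveI hGprob : IsProbabilityMeasure (G : Measure (EuclideanSpace ℝ (Fin d))) := G.prop
    set s : EuclideanSpace ℝ (Fin d) → Grid d n := snap n η' with hsdef
    have hsm : Measurable s := snap_measurable n η'
    set ν := Measure.map s (G : Measure (EuclideanSpace ℝ (Fin d))) with hνdef
    haveI hνprob : IsProbabilityMeasure ν := Measure.isProbabilityMeasure_map hsm.aemeasurable
    set p : Grid d n → ℝ := fun f => (ν {f}).toReal with hpdef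
    have hp0 : ∀ f, 0 ≤ p f := fun f => ENNReal.toReal_nonneg
    have hpsum : ∑ f, p f = 1 := by
      have h1 : ∑ f : Grid d n, ν {f} = ν Set.univ := by
        rw [← measure_biUnion_finset]
        · congr 1
          ext g
          simp
        · intro f _ g _ hfg
          simpa [Set.disjoint_singleton] using hfg
        · exact fun f _ => measurableSet_singleton f
      have h2 : (∑ f : Grid d n, ν {f}).toReal = 1 := by rw [h1]; simp
      rw [← h2, ENNReal.toReal_sum (fun f _ => measure_ne_top _ _)]
    set h : (Fin J → EuclideanSpace ℝ (Fin d)) → Grid d n → ℝ :=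
      fun x f => mlogit j x (c f) with hhdef
    set Fp : (Fin J → EuclideanSpace ℝ (Fin d)) → ℝ := fun x => ∑ f, p f * h x f with hFpdef
    -- integral identity for the snapped kernel
    have hint_snap : ∀ x, Integrable (fun β => mlogit j x (c (s β)))
        (G : Measure (EuclideanSpace ℝ (Fin d))) := by
      intro x
      apply Integrable.mono' (integrable_const 1)
        (((measurable_of_countable (fun f => mlogit j x (c f))).comp hsm).aestronglyMeasurable)
      filter_upwards with β
      simp only [Function.comp_apply, Real.norm_eq_abs]
      rw [abs_of_nonneg (mlogit_nonneg j x (c (s β)))]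
      exact mlogit_le_one _ _ _
    have hFp_eq : ∀ x, ∫ β, mlogit j x (c (s β)) ∂(G : Measure (EuclideanSpace ℝ (Fin d)))
        = Fp x := by
      intro x
      have hmeas_h : Measurable (h x) := measurable_of_countable _
      calc ∫ β, mlogit j x (c (s β)) ∂(G : Measure (EuclideanSpace ℝ (Fin d)))
          = ∫ f, h x f ∂ν :=
            (integral_map hsm.aemeasurable hmeas_h.aestronglyMeasurable).symm
        _ = ∑ f, (ν {f}).toReal • h x f := integral_fintype (Integrable.of_finite)
        _ = Fp x := by
            rw [hFpdef]
            exact Finset.sum_congr rfl fun f _ => by rw [smul_eq_mul, hpdef]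
    -- the ball
    set B : Set (EuclideanSpace ℝ (Fin d)) := {β | ‖β‖ ≤ a} with hBdef
    have hBm : MeasurableSet B := by
      have : IsClosed B := isClosed_le continuous_norm continuous_const
      exact this.measurableSet
    have hout : ((G : Measure (EuclideanSpace ℝ (Fin d))) Bᶜ).toReal ≤ δ := by
      have h1 : (G : Measure (EuclideanSpace ℝ (Fin d))) Bᶜ
          = 1 - (G : Measure (EuclideanSpace ℝ (Fin d))) B :=
        by rw [measure_compl hBm (measure_ne_top _ _), measure_univ]
      have h2 : (G : Measure (EuclideanSpace ℝ (Fin d))) Bᶜ ≤ ENNReal.ofReal δ := by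
        rw [h1]
        calc (1:ℝ≥0∞) - (G : Measure (EuclideanSpace ℝ (Fin d))) B
            ≤ 1 - ENNReal.ofReal (1 - δ) := tsub_le_tsub_left hG 1
          _ = ENNReal.ofReal δ := by
              rw [show (1:ℝ≥0∞) = ENNReal.ofReal 1 by simp,
                ← ENNReal.ofReal_sub 1 (by linarith)]
              norm_num
      exact ENNReal.toReal_le_of_le_ofReal hδ0.le h2
    -- pointwise closeness of snapped kernel
    have hsnapclose : ∀ β ∈ B, ∀ x ∈ 𝒳,
        |mlogit j x β - mlogit j x (c (s β))| ≤ δ/2 := by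
      intro β hβ x hx
      have hd2 : ‖c (s β) - β‖ ≤ Real.sqrt d * (η'/2) := gpt_snap_close hη' hna β hβ
      have hbound := mlogit_abs_sub_le (R := R) (t := (R+1)*η) j x β (c (s β)) (hR x hx) ?_
      · linarith [hbound, hexpkey.le, hexpkey.ge]
      · have h1 : ‖β - c (s β)‖ = ‖c (s β) - β‖ := norm_sub_rev _ _
        calc R * ‖β - c (s β)‖ ≤ R * η := by
              rw [h1]
              exact mul_le_mul_of_nonneg_left (hd2.trans hgridfine) hRnn
          _ ≤ (R+1) * η := by nlinarith [hη.le]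
    -- integral closeness
    have hFpclose : ∀ x ∈ 𝒳, |choiceProb j x G - Fp x| ≤ δ/2 + δ := by
      intro x hx
      rw [← hFp_eq x, choiceProb,
        ← integral_sub (integrable_mlogit j x _) (hint_snap x)]
      have habs : |∫ β, (mlogit j x β - mlogit j x (c (s β)))
            ∂(G : Measure (EuclideanSpace ℝ (Fin d)))|
          ≤ ∫ β, |mlogit j x β - mlogit j x (c (s β))|
            ∂(G : Measure (EuclideanSpace ℝ (Fin d))) := by
        simpa [Real.norm_eq_abs] using norm_integral_le_integral_norm
          (fun β => mlogit j x β - mlogit j x (c (s β)))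
          (μ := (G : Measure (EuclideanSpace ℝ (Fin d))))
      refine habs.trans ?_
      have hstep : ∫ β, |mlogit j x β - mlogit j x (c (s β))|
            ∂(G : Measure (EuclideanSpace ℝ (Fin d)))
          ≤ ∫ β, (δ/2 + Bᶜ.indicator (fun _ => 1) β)
            ∂(G : Measure (EuclideanSpace ℝ (Fin d))) := by
        apply integral_mono ((integrable_mlogit j x _).sub (hint_snap x)).abs
        · exact (integrable_const _).add ((integrable_const 1).indicator hBm.compl)
        · intro β
          simp only [Pi.sub_apply]
          by_cases hβ : β ∈ B
          · have hcl := hsnapclose β hβ x hx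
            have hind : Bᶜ.indicator (fun _ => (1:ℝ)) β = 0 :=
              Set.indicator_of_notMem (by simpa using hβ) _
            simp only [hind]
            linarith
          · have hind : Bᶜ.indicator (fun _ => (1:ℝ)) β = 1 :=
              Set.indicator_of_mem (by simpa using hβ) _
            simp only [hind]
            have b1 := mlogit_le_one j x β
            have b2 := mlogit_nonneg j x β
            have b3 := mlogit_le_one j x (c (s β))
            have b4 := mlogit_nonneg j x (c (s β))
            rw [abs_le]
            constructor <;> linarith
      refine hstep.trans ?_
      rw [integral_add (integrable_const _) ((integrable_const 1).indicator hBm.compl),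
        integral_const, integral_indicator_const _ hBm.compl]
      simp only [Measure.real, measure_univ, ENNReal.toReal_one, one_smul, smul_eq_mul, mul_one]
      linarith [hout]
    -- bounds on h
    have hhb : ∀ x, ∀ f : Grid d n, (h x f - ∑ f', p f' * h x f')^2 ≤ 1 := by
      intro x f
      have h0 : 0 ≤ h x f := mlogit_nonneg _ _ _
      have h1 : h x f ≤ 1 := mlogit_le_one _ _ _
      have hμ0 : 0 ≤ ∑ f', p f' * h x f' :=
        Finset.sum_nonneg fun f' _ => mul_nonneg (hp0 f') (mlogit_nonneg _ _ _)
      have hμ1 : ∑ f', p f' * h x f' ≤ 1 := by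
        calc ∑ f', p f' * h x f' ≤ ∑ f', p f' :=
              Finset.sum_le_sum fun f' _ =>
                mul_le_of_le_one_right (hp0 f') (mlogit_le_one _ _ _)
          _ = 1 := hpsum
      nlinarith
    -- per-x variance bound
    have hper_x : ∀ x, ∑ w : Fin T → Grid d n, (∏ s', p (w s')) *
        |(T:ℝ)⁻¹ * ∑ s', h x (w s') - Fp x| ≤ Real.sqrt ((T:ℝ)⁻¹) := by
      intro x
      exact empirical_abs_bound hTpos p (h x) hp0 hpsum (hhb x)
    set Fw : (Fin T → Grid d n) → (Fin J → EuclideanSpace ℝ (Fin d)) → ℝ :=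
      fun w x => (T:ℝ)⁻¹ * ∑ s', h x (w s') with hFwdef
    set A : (Fin T → Grid d n) → ℝ := fun w => ∫ x in 𝒳, |Fw w x - Fp x| ∂M with hAdef
    -- continuity in x
    have hcont_h : ∀ f : Grid d n, Continuous (fun x => h x f) :=
      fun f => mlogit_continuous_x j (c f)
    have hcont_Fp : Continuous Fp := by
      rw [hFpdef]
      exact continuous_finset_sum _ fun f _ => continuous_const.mul (hcont_h f)
    have hcont_Fw : ∀ w, Continuous (Fw w) := by
      intro w
      rw [hFwdef]
      exact continuous_const.mul (continuous_finset_sum _ fun s' _ => hcont_h (w s'))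
    have hintA : ∀ w, IntegrableOn (fun x => |Fw w x - Fp x|) 𝒳 M :=
      fun w => (((hcont_Fw w).sub hcont_Fp).abs).continuousOn.integrableOn_compact h𝒳
    -- average bound and existence of a good w
    have hAsum : ∑ w : Fin T → Grid d n, (∏ s', p (w s')) * A w ≤ Real.sqrt ((T:ℝ)⁻¹) := by
      have step1 : ∑ w : Fin T → Grid d n, (∏ s', p (w s')) * A w
          = ∫ x in 𝒳, (∑ w : Fin T → Grid d n,
              (∏ s', p (w s')) * |Fw w x - Fp x|) ∂M := by
        calc ∑ w : Fin T → Grid d n, (∏ s', p (w s')) * A w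
            = ∑ w : Fin T → Grid d n, ∫ x in 𝒳,
                ((∏ s', p (w s')) * |Fw w x - Fp x|) ∂M :=
              Finset.sum_congr rfl fun w _ => (integral_const_mul _ _).symm
          _ = ∫ x in 𝒳, (∑ w : Fin T → Grid d n,
                (∏ s', p (w s')) * |Fw w x - Fp x|) ∂M :=
              (integral_finset_sum _ fun w _ => (hintA w).const_mul _).symm
      rw [step1]
      have hintsum : IntegrableOn (fun x => ∑ w : Fin T → Grid d n,
          (∏ s', p (w s')) * |Fw w x - Fp x|) 𝒳 M :=
        integrable_finset_sum _ fun w _ => (hintA w).const_mul _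
      calc ∫ x in 𝒳, (∑ w : Fin T → Grid d n,
              (∏ s', p (w s')) * |Fw w x - Fp x|) ∂M
          ≤ ∫ _x in 𝒳, Real.sqrt ((T:ℝ)⁻¹) ∂M := by
            apply integral_mono hintsum
              (integrableOn_const (measure_lt_top _ _).ne)
            intro x
            exact hper_x x
        _ ≤ Real.sqrt ((T:ℝ)⁻¹) := by
            rw [integral_const, Measure.real, Measure.restrict_apply_univ, smul_eq_mul]
            have h1 : ((M 𝒳).toReal) ≤ 1 := by
              have := prob_le_one (μ := M) (s := 𝒳)
              exact ENNReal.toReal_le_of_le_ofReal zero_le_one (by simpa using this)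
            nlinarith [Real.sqrt_nonneg ((T:ℝ)⁻¹), (M 𝒳).toReal_nonneg]
    have hgood : ∃ w : Fin T → Grid d n, A w < δ/2 := by
      by_contra hcon
      push_neg at hcon
      have h1 : δ/2 ≤ ∑ w : Fin T → Grid d n, (∏ s', p (w s')) * A w := by
        calc δ/2 = δ/2 * ∑ w : Fin T → Grid d n, ∏ s', p (w s') := by
              rw [sum_prod_weights T p hpsum]; ring
          _ = ∑ w : Fin T → Grid d n, δ/2 * ∏ s', p (w s') := Finset.mul_sum _ _ _
          _ ≤ ∑ w : Fin T → Grid d n, (∏ s', p (w s')) * A w := by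
              apply Finset.sum_le_sum
              intro w _
              have hPnn : 0 ≤ ∏ s', p (w s') := Finset.prod_nonneg fun s' _ => hp0 _
              nlinarith [hcon w]
      linarith [hAsum, hsqrtT]
    obtain ⟨w, hw⟩ := hgood
    refine ⟨e.symm w, ?_⟩
    -- evaluation of the candidate
    have hGw_eval : ∀ x, choiceProb j x (Gw w) = Fw w x := by
      intro x
      rw [choiceProb, hGwdef]
      rw [integral_smul_measure,
        integral_finset_sum_measure (fun s' _ => integrable_mlogit j x _)]
      simp only [integral_dirac]
      rw [smul_eq_mul, ENNReal.toReal_inv, ENNReal.toReal_natCast]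
    have hGscoe : ((⟨Gw (e (e.symm w)), hGwprob _⟩ : ProbabilityMeasure
        (EuclideanSpace ℝ (Fin d))) : Measure (EuclideanSpace ℝ (Fin d))) = Gw w := by
      simp [Equiv.apply_symm_apply]
    -- measurability of x ↦ choiceProb j x G
    have hunc : StronglyMeasurable (Function.uncurry
        fun (x : Fin J → EuclideanSpace ℝ (Fin d)) β => mlogit j x β) := by
      exact (mlogit_continuous j).stronglyMeasurable
    have hsmG : StronglyMeasurable
        (fun x => choiceProb j x (G : Measure (EuclideanSpace ℝ (Fin d)))) := by
      exact hunc.integral_prod_right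
    have hintG : IntegrableOn
        (fun x => choiceProb j x (G : Measure (EuclideanSpace ℝ (Fin d)))) 𝒳 M := by
      apply Integrable.mono' (integrable_const (1:ℝ))
        (hsmG.aestronglyMeasurable.restrict)
      filter_upwards with x
      rw [Real.norm_eq_abs, abs_of_nonneg (choiceProb_nonneg _ _ _)]
      exact choiceProb_le_one _ _ _
    have hintGw : IntegrableOn (fun x => choiceProb j x (Gw w)) 𝒳 M := by
      have : (fun x => choiceProb j x (Gw w)) = Fw w := funext fun x => hGw_eval x
      rw [this]
      exact (hcont_Fw w).continuousOn.integrableOn_compact h𝒳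
    have hint1 : IntegrableOn
        (fun x => |choiceProb j x G - choiceProb j x (Gw w)|) 𝒳 M :=
      (hintG.sub hintGw).abs
    -- final estimate
    have hfinal : ∫ x in 𝒳, |choiceProb j x G - choiceProb j x (Gw w)| ∂M
        ≤ (δ/2 + δ) + A w := by
      have hstep : ∫ x in 𝒳, |choiceProb j x G - choiceProb j x (Gw w)| ∂M
          ≤ ∫ x in 𝒳, ((δ/2 + δ) + |Fw w x - Fp x|) ∂M := by
        apply setIntegral_mono_on hint1
          (((integrableOn_const (measure_lt_top _ _).ne)).add (hintA w))
          h𝒳.measurableSet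
        intro x hx
        have h1 := hFpclose x hx
        rw [hGw_eval x]
        calc |choiceProb j x G - Fw w x|
            ≤ |choiceProb j x G - Fp x| + |Fp x - Fw w x| := abs_sub_le _ _ _
          _ ≤ (δ/2 + δ) + |Fw w x - Fp x| := by
              rw [abs_sub_comm (Fp x) (Fw w x)]
              linarith
      refine hstep.trans ?_
      rw [integral_add (integrableOn_const (C := δ/2 + δ) (measure_lt_top _ _).ne) (hintA w),
        integral_const, Measure.real, Measure.restrict_apply_univ, smul_eq_mul]
      have h1 : ((M 𝒳).toReal) ≤ 1 := by
        have := prob_le_one (μ := M) (s := 𝒳)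
        exact ENNReal.toReal_le_of_le_ofReal zero_le_one (by simpa using this)
      have h2 : 0 ≤ δ/2 + δ := by linarith
      nlinarith [(M 𝒳).toReal_nonneg]
    have hfin2 : ∫ x in 𝒳, |choiceProb j x G - choiceProb j x (Gw w)| ∂M < 3 * δ := by
      calc ∫ x in 𝒳, |choiceProb j x G - choiceProb j x (Gw w)| ∂M
          ≤ (δ/2 + δ) + A w := hfinal
        _ < (δ/2 + δ) + δ/2 := by linarith
        _ < 3 * δ := by linarith
    simp only [Equiv.apply_symm_apply]
    exact hfin2
end
end
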